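/- arXiv:1609.03446 — 6 statements merged into one kernel-verified Lean document; each statement's English description precedes it below -/
import Mathlib

section
/- Let T : V → W be a linear isomorphism between vector spaces of arbitrary (possibly infinite) dimension with specified bases 𝒱, 𝒲. Then the coefficient graph of T (edges v → w when T(v) has nonzero w-coefficient) admits a perfect matching, i.e., there is a bijection σ : 𝒱 → 𝒲 with the σ(v)-coefficient of T(v) nonzero for every v. -/
open Finsupp Set

attribute [local instance] Classical.propDecidable

namespace PMatch

variable {K : Type*} [Field K] {ι : Type*} {κ : Type*}

/-- sum formula for a linear map out of finsupps evaluated at a point -/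
lemma apply_eq_sum (L : (ι →₀ K) →ₗ[K] (κ →₀ K)) (x : ι →₀ K) (j : κ) :
    L x j = x.sum fun i c => c * L (Finsupp.single i 1) j := by
  conv_lhs => rw [← Finsupp.sum_single x]
  rw [map_finsuppSum, Finsupp.sum_apply]
  apply Finsupp.sum_congr
  intro i _
  have : Finsupp.single i (x i) = (x i) • Finsupp.single i (1:K) := by
    rw [Finsupp.smul_single, smul_eq_mul, mul_one]
  rw [this, map_smul, Finsupp.smul_apply, smul_eq_mul]

lemma exists_entry_ne_zero (L : (ι →₀ K) →ₗ[K] (κ →₀ K)) (x : ι →₀ K) (j : κ)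
    (h : L x j ≠ 0) : ∃ i ∈ x.support, L (Finsupp.single i 1) j ≠ 0 := by
  by_contra hc
  push_neg at hc
  apply h
  rw [apply_eq_sum]
  apply Finset.sum_eq_zero
  intro i hi
  simp only [hc i hi, mul_zero]

variable (T : (ι →₀ K) ≃ₗ[K] (κ →₀ K))

/-- the restricted map between coordinate subspaces -/
noncomputable def Phi (A : Set ι) (B : Set κ) :
    supported K K A →ₗ[K] supported K K B :=
  (restrictDom K K B) ∘ₗ (T : (ι →₀ K) →ₗ[K] (κ →₀ K)) ∘ₗ (Submodule.subtype _)

lemma Phi_coe (A : Set ι) (B : Set κ) (x : supported K K A) :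
    ((Phi T A B x : supported K K B) : κ →₀ K) = Finsupp.filter (· ∈ B) (T (x : ι →₀ K)) := by
  simp [Phi]

def GoodPair (A : Set ι) (B : Set κ) : Prop := Function.Bijective (Phi T A B)

end PMatch

namespace PMatch2
open PMatch

variable {K : Type*} [Field K] {ι : Type*} {κ : Type*}
variable (T : (ι →₀ K) ≃ₗ[K] (κ →₀ K))

def ClosedPair (A : Set ι) (B : Set κ) : Prop :=
  (∀ i ∈ A, ∀ j, T (Finsupp.single i 1) j ≠ 0 → j ∈ B) ∧
  (∀ j ∈ B, ∀ i, T.symm (Finsupp.single j 1) i ≠ 0 → i ∈ A)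

lemma supp_image {A : Set ι} {B : Set κ}
    (h : ∀ i ∈ A, ∀ j, T (Finsupp.single i 1) j ≠ 0 → j ∈ B)
    {x : ι →₀ K} (hx : ↑x.support ⊆ A) : ↑(T x).support ⊆ B := by
  intro j hj
  rw [Finset.mem_coe, Finsupp.mem_support_iff] at hj
  obtain ⟨i, hi, hne⟩ := exists_entry_ne_zero (T : (ι →₀ K) →ₗ[K] (κ →₀ K)) x j
    (by simpa using hj)
  exact h i (hx hi) j (by simpa using hne)

lemma goodPair_diff {C : Set ι} {D : Set κ} {C' : Set ι} {D' : Set κ}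
    (h : ClosedPair T C D) (h' : ClosedPair T C' D')
    (hC : C ⊆ C') (hD : D ⊆ D') : GoodPair T (C' \ C) (D' \ D) := by
  constructor
  · rw [injective_iff_map_eq_zero]
    rintro ⟨x, hxA⟩ hx
    have hx' : Finsupp.filter (· ∈ D' \ D) (T x) = 0 := by
      have := Subtype.ext_iff.mp hx
      rw [Phi_coe] at this
      simpa using this
    rw [Finsupp.mem_supported] at hxA
    have h1 : ↑(T x).support ⊆ D' := supp_image T h'.1 (hxA.trans diff_subset)
    have h2 : ↑(T x).support ⊆ D := by
      intro j hj
      by_contra hjD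
      have hj' : j ∈ D' \ D := ⟨h1 hj, hjD⟩
      rw [Finset.mem_coe, Finsupp.mem_support_iff] at hj
      apply hj
      have := DFunLike.congr_fun hx' j
      rw [Finsupp.filter_apply, if_pos hj'] at this
      exact this
    have h3 : ↑x.support ⊆ C := by
      have := supp_image T.symm h.2 h2
      simpa using this
    apply Subtype.ext
    simp only [ZeroMemClass.coe_zero]
    ext i
    by_contra hne
    have hmem : i ∈ x.support := Finsupp.mem_support_iff.mpr (by simpa using hne)
    exact (hxA (Finset.mem_coe.mpr hmem)).2 (h3 (Finset.mem_coe.mpr hmem))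
  · rintro ⟨y, hyB⟩
    rw [Finsupp.mem_supported] at hyB
    set v := T.symm y with hv
    have hvC' : ↑v.support ⊆ C' := by
      have := supp_image T.symm h'.2 (hyB.trans diff_subset)
      simpa using this
    set x := v.filter (· ∈ C' \ C) with hxdef
    have hxsupp : ↑x.support ⊆ C' \ C := by
      rw [hxdef]
      intro i hi
      rw [Finset.mem_coe, Finsupp.support_filter, Finset.mem_filter] at hi
      exact hi.2
    refine ⟨⟨x, hxsupp⟩, ?_⟩
    have hwsupp : ↑(v - x).support ⊆ C := by
      intro i hi
      rw [Finset.mem_coe, Finsupp.mem_support_iff] at hi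
      by_contra hiC
      apply hi
      rw [Finsupp.sub_apply]
      by_cases hiC' : i ∈ C'
      · have hmem : i ∈ C' \ C := ⟨hiC', hiC⟩
        rw [hxdef, Finsupp.filter_apply, if_pos hmem, sub_self]
      · have hvz : v i = 0 := by
          by_contra hvz
          exact hiC' (hvC' (Finset.mem_coe.mpr (Finsupp.mem_support_iff.mpr hvz)))
        rw [hxdef, Finsupp.filter_apply, if_neg (fun hh => hiC' hh.1), hvz, sub_zero]
    have hTw : ↑(T (v - x)).support ⊆ D := supp_image T h.1 hwsupp
    apply Subtype.ext
    rw [Phi_coe]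
    ext j
    rw [Finsupp.filter_apply]
    by_cases hj : j ∈ D' \ D
    · rw [if_pos hj]
      have hTx : T x = y - T (v - x) := by
        rw [map_sub]
        simp [hv]
      have hzero : T (v - x) j = 0 := by
        by_contra hne
        exact hj.2 (hTw (Finset.mem_coe.mpr (Finsupp.mem_support_iff.mpr hne)))
      show (T x) j = y j
      rw [hTx, Finsupp.sub_apply, hzero, sub_zero]
    · rw [if_neg hj]
      symm
      show y j = 0
      by_contra hne
      exact hj (hyB (Finset.mem_coe.mpr (Finsupp.mem_support_iff.mpr hne)))

end PMatch2

namespace PMatch3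
open PMatch PMatch2

variable {K : Type*} [Field K] {ι : Type*} {κ : Type*}
variable (T : (ι →₀ K) ≃ₗ[K] (κ →₀ K))

lemma subtype_eq_sum (A : Set ι) (x : Finsupp.supported K K A) :
    x = ∑ i ∈ (x : ι →₀ K).support.attach,
      (x : ι →₀ K) i.1 • (⟨Finsupp.single i.1 1,
        Finsupp.single_mem_supported K 1 (x.2 (Finset.mem_coe.mpr i.2))⟩ :
          Finsupp.supported K K A) := by
  apply Subtype.ext
  rw [Submodule.coe_sum]
  conv_lhs => rw [← Finsupp.sum_single (x : ι →₀ K)]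
  rw [Finsupp.sum, ← Finset.sum_attach _ (fun i => Finsupp.single i ((x : ι →₀ K) i))]
  apply Finset.sum_congr rfl
  intro i _
  rw [SetLike.val_smul, Finsupp.smul_single, smul_eq_mul, mul_one]

lemma eval_expand {A : Set ι} {B : Set κ}
    (L : Finsupp.supported K K A →ₗ[K] Finsupp.supported K K B)
    (x : Finsupp.supported K K A) (j : κ) :
    ((L x : Finsupp.supported K K B) : κ →₀ K) j
      = ∑ i ∈ (x : ι →₀ K).support.attach,
        (x : ι →₀ K) i.1 * ((L ⟨Finsupp.single i.1 1,
          Finsupp.single_mem_supported K 1 (x.2 (Finset.mem_coe.mpr i.2))⟩ : _) : κ →₀ K) j := by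
  conv_lhs => rw [subtype_eq_sum A x]
  rw [map_sum, Submodule.coe_sum, Finset.sum_apply']
  apply Finset.sum_congr rfl
  intro i _
  rw [map_smul, SetLike.val_smul, Finsupp.smul_apply, smul_eq_mul]

end PMatch3

namespace PMatch4
open PMatch PMatch2 PMatch3

variable {K : Type*} [Field K] {ι : Type*} {κ : Type*}
variable (T : (ι →₀ K) ≃ₗ[K] (κ →₀ K))

lemma deletion {A : Set ι} {B : Set κ} (hG : GoodPair T A B) {i₀ : ι} {j₀ : κ}
    (hi₀ : i₀ ∈ A) (hj₀ : j₀ ∈ B)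
    (hn : (((LinearEquiv.ofBijective _ hG).symm
        ⟨Finsupp.single j₀ 1, Finsupp.single_mem_supported K 1 hj₀⟩ :
          Finsupp.supported K K A) : ι →₀ K) i₀ ≠ 0) :
    GoodPair T (A \ {i₀}) (B \ {j₀}) := by
  set S := LinearEquiv.ofBijective _ hG with hS
  set u : Finsupp.supported K K A :=
    S.symm ⟨Finsupp.single j₀ 1, Finsupp.single_mem_supported K 1 hj₀⟩ with hu
  have hSu : Phi T A B u = ⟨Finsupp.single j₀ 1, Finsupp.single_mem_supported K 1 hj₀⟩ := by
    have h1 : S u = ⟨Finsupp.single j₀ 1, Finsupp.single_mem_supported K 1 hj₀⟩ :=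
      S.apply_symm_apply _
    exact h1
  have hSu' : Finsupp.filter (· ∈ B) (T (u : ι →₀ K)) = Finsupp.single j₀ 1 := by
    have := Subtype.ext_iff.mp hSu
    rwa [Phi_coe] at this
  constructor
  · rw [injective_iff_map_eq_zero]
    rintro ⟨x, hxsupp⟩ hx
    have hx' : Finsupp.filter (· ∈ B \ {j₀}) (T x) = 0 := by
      have := Subtype.ext_iff.mp hx
      rw [Phi_coe] at this
      simpa using this
    rw [Finsupp.mem_supported] at hxsupp
    have hxA : x ∈ Finsupp.supported K K A := hxsupp.trans diff_subset
    set c := T x j₀ with hc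
    have hfB : Finsupp.filter (· ∈ B) (T x) = Finsupp.single j₀ c := by
      ext j
      rw [Finsupp.filter_apply]
      by_cases hjB : j ∈ B
      · rw [if_pos hjB]
        by_cases hjj : j = j₀
        · subst hjj
          rw [Finsupp.single_eq_same]
        · have hmem : j ∈ B \ {j₀} := ⟨hjB, hjj⟩
          have h0 := DFunLike.congr_fun hx' j
          rw [Finsupp.filter_apply, if_pos hmem] at h0
          simp only [Finsupp.coe_zero, Pi.zero_apply] at h0
          rw [h0, Finsupp.single_eq_of_ne' (fun hh => hjj hh.symm)]
      · rw [if_neg hjB]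
        rw [Finsupp.single_eq_of_ne' (fun hh => hjB (by rw [← hh]; exact hj₀))]
    have hPhi : Phi T A B ⟨x, hxA⟩ = Phi T A B (c • u) := by
      rw [map_smul, hSu]
      apply Subtype.ext
      rw [Phi_coe, SetLike.val_smul, Finsupp.smul_single, smul_eq_mul, mul_one]
      exact hfB
    have hxu : (⟨x, hxA⟩ : Finsupp.supported K K A) = c • u := hG.1 hPhi
    have hcoe := Subtype.ext_iff.mp hxu
    have hx0 : x i₀ = c * (u : ι →₀ K) i₀ := by
      have := DFunLike.congr_fun hcoe i₀
      simpa [SetLike.val_smul] using this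
    have hxi0 : x i₀ = 0 := by
      by_contra hne
      exact (hxsupp (Finset.mem_coe.mpr (Finsupp.mem_support_iff.mpr hne))).2 rfl
    have hc0 : c = 0 := by
      rcases mul_eq_zero.mp (hx0 ▸ hxi0) with h | h
      · exact h
      · exact absurd h hn
    apply Subtype.ext
    simp only [ZeroMemClass.coe_zero]
    have hxx : x = c • (u : ι →₀ K) := by
      simpa [SetLike.val_smul] using hcoe
    rw [hxx, hc0, zero_smul]
  · rintro ⟨y, hysupp⟩
    rw [Finsupp.mem_supported] at hysupp
    have hyB : y ∈ Finsupp.supported K K B := hysupp.trans diff_subset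
    set w : Finsupp.supported K K A := S.symm ⟨y, hyB⟩ with hw
    have hSw : Phi T A B w = ⟨y, hyB⟩ := by
      have h1 : S w = ⟨y, hyB⟩ := S.apply_symm_apply _
      exact h1
    have hSw' : Finsupp.filter (· ∈ B) (T (w : ι →₀ K)) = y := by
      have := Subtype.ext_iff.mp hSw
      rwa [Phi_coe] at this
    set n := (u : ι →₀ K) i₀ with hndef
    set c := (w : ι →₀ K) i₀ / n with hcdef
    set z : Finsupp.supported K K A := w - c • u with hz
    have hzcoe : (z : ι →₀ K) = (w : ι →₀ K) - c • (u : ι →₀ K) := rfl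
    have hz0 : (z : ι →₀ K) i₀ = 0 := by
      rw [hzcoe, Finsupp.sub_apply, Finsupp.smul_apply, smul_eq_mul, hcdef,
        div_mul_cancel₀ _ hn, sub_self]
    have hzsupp : ↑(z : ι →₀ K).support ⊆ A \ {i₀} := by
      intro i hi
      refine ⟨z.2 hi, ?_⟩
      rw [Finset.mem_coe, Finsupp.mem_support_iff] at hi
      intro hii
      rw [Set.mem_singleton_iff] at hii
      exact hi (hii ▸ hz0)
    refine ⟨⟨(z : ι →₀ K), hzsupp⟩, ?_⟩
    apply Subtype.ext
    rw [Phi_coe]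
    have hTz : T ((z : ι →₀ K)) = T (w : ι →₀ K) - c • T (u : ι →₀ K) := by
      rw [hzcoe, map_sub, map_smul]
    ext j
    rw [Finsupp.filter_apply]
    by_cases hj : j ∈ B \ {j₀}
    · rw [if_pos hj]
      show _ = y j
      rw [hTz, Finsupp.sub_apply, Finsupp.smul_apply, smul_eq_mul]
      have h1 : T (w : ι →₀ K) j = y j := by
        have := DFunLike.congr_fun hSw' j
        rwa [Finsupp.filter_apply, if_pos hj.1] at this
      have h2 : T (u : ι →₀ K) j = 0 := by
        have := DFunLike.congr_fun hSu' j
        rw [Finsupp.filter_apply, if_pos hj.1] at this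
        rw [this, Finsupp.single_eq_of_ne' (fun hh => hj.2 hh.symm)]
      rw [h1, h2, mul_zero, sub_zero]
    · rw [if_neg hj]
      show (0 : K) = y j
      symm
      by_contra hne
      exact hj (hysupp (Finset.mem_coe.mpr (Finsupp.mem_support_iff.mpr hne)))

end PMatch4

namespace PMatch5
open PMatch PMatch2 PMatch3 PMatch4

variable {K : Type*} [Field K] {ι : Type*} {κ : Type*}
variable (T : (ι →₀ K) ≃ₗ[K] (κ →₀ K))

lemma stepF {A : Set ι} {B : Set κ} (hG : GoodPair T A B) {i₀ : ι} (hi₀ : i₀ ∈ A) :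
    ∃ j₀ ∈ B, T (Finsupp.single i₀ 1) j₀ ≠ 0 ∧ GoodPair T (A \ {i₀}) (B \ {j₀}) := by
  set S := LinearEquiv.ofBijective _ hG with hS
  set xi : Finsupp.supported K K A :=
    ⟨Finsupp.single i₀ 1, Finsupp.single_mem_supported K 1 hi₀⟩ with hxi
  set y := S xi with hy
  have hexp := eval_expand (S.symm.toLinearMap) y i₀
  have hLHS : ((S.symm.toLinearMap y : Finsupp.supported K K A) : ι →₀ K) i₀ = 1 := by
    show ((S.symm y : Finsupp.supported K K A) : ι →₀ K) i₀ = 1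
    rw [hy, S.symm_apply_apply, hxi]
    exact Finsupp.single_eq_same
  rw [hLHS] at hexp
  obtain ⟨j, _, hterm⟩ := Finset.exists_ne_zero_of_sum_ne_zero
    (s := (y : κ →₀ K).support.attach) (by rw [← hexp]; exact one_ne_zero)
  rw [mul_ne_zero_iff] at hterm
  have hjB : j.1 ∈ B := y.2 (Finset.mem_coe.mpr j.2)
  have hyval : (y : κ →₀ K) j.1 = T (Finsupp.single i₀ 1) j.1 := by
    have hcoe : (y : κ →₀ K) = Finsupp.filter (· ∈ B) (T (xi : ι →₀ K)) := by
      rw [hy, hS]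
      rw [show ((LinearEquiv.ofBijective (Phi T A B) hG) xi : κ →₀ K)
        = ((Phi T A B xi : Finsupp.supported K K B) : κ →₀ K) from by
          rfl]
      rw [Phi_coe]
    have h2 := DFunLike.congr_fun hcoe j.1
    rwa [Finsupp.filter_apply, if_pos hjB] at h2
  refine ⟨j.1, hjB, ?_, ?_⟩
  · rw [← hyval]; exact hterm.1
  · refine deletion T hG hi₀ hjB ?_
    exact hterm.2

lemma stepB {A : Set ι} {B : Set κ} (hG : GoodPair T A B) {j₀ : κ} (hj₀ : j₀ ∈ B) :
    ∃ i₀ ∈ A, T (Finsupp.single i₀ 1) j₀ ≠ 0 ∧ GoodPair T (A \ {i₀}) (B \ {j₀}) := by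
  set S := LinearEquiv.ofBijective _ hG with hS
  set yj : Finsupp.supported K K B :=
    ⟨Finsupp.single j₀ 1, Finsupp.single_mem_supported K 1 hj₀⟩ with hyj
  set u := S.symm yj with hu
  have hexp := eval_expand (S.toLinearMap) u j₀
  have hLHS : ((S.toLinearMap u : Finsupp.supported K K B) : κ →₀ K) j₀ = 1 := by
    show ((S u : Finsupp.supported K K B) : κ →₀ K) j₀ = 1
    rw [hu, S.apply_symm_apply, hyj]
    exact Finsupp.single_eq_same
  rw [hLHS] at hexp
  obtain ⟨i, _, hterm⟩ := Finset.exists_ne_zero_of_sum_ne_zero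
    (s := (u : ι →₀ K).support.attach) (by rw [← hexp]; exact one_ne_zero)
  rw [mul_ne_zero_iff] at hterm
  have hiA : i.1 ∈ A := u.2 (Finset.mem_coe.mpr i.2)
  have hval : ((S.toLinearMap ⟨Finsupp.single i.1 1,
      Finsupp.single_mem_supported K 1 (u.2 (Finset.mem_coe.mpr i.2))⟩ :
        Finsupp.supported K K B) : κ →₀ K) j₀ = T (Finsupp.single i.1 1) j₀ := by
    rw [show ((S.toLinearMap ⟨Finsupp.single i.1 1,
        Finsupp.single_mem_supported K 1 (u.2 (Finset.mem_coe.mpr i.2))⟩ :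
          Finsupp.supported K K B) : κ →₀ K)
      = ((Phi T A B ⟨Finsupp.single i.1 1,
          Finsupp.single_mem_supported K 1 (u.2 (Finset.mem_coe.mpr i.2))⟩ :
            Finsupp.supported K K B) : κ →₀ K) from by
        rw [hS]
        rw [show (S.toLinearMap : Finsupp.supported K K A → Finsupp.supported K K B)
            = (S : Finsupp.supported K K A → Finsupp.supported K K B) from rfl]
        rfl]
    rw [Phi_coe, Finsupp.filter_apply, if_pos hj₀]
  refine ⟨i.1, hiA, ?_, ?_⟩
  · rw [← hval]; exact hterm.2
  · refine deletion T hG hiA hj₀ ?_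
    exact hterm.1

end PMatch5

namespace PMatch6
open PMatch PMatch2 PMatch3 PMatch4 PMatch5

variable {K : Type*} [Field K] {ι : Type*} {κ : Type*}
variable (T : (ι →₀ K) ≃ₗ[K] (κ →₀ K))

noncomputable def closeSeq (A₀ : Set ι) (B₀ : Set κ) : ℕ → Set ι × Set κ
  | 0 => (A₀, B₀)
  | n+1 =>
    let p := closeSeq A₀ B₀ n
    (p.1 ∪ ⋃ j ∈ p.2, ↑(T.symm (Finsupp.single j 1)).support,
     p.2 ∪ ⋃ i ∈ p.1, ↑(T (Finsupp.single i 1)).support)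

lemma closed_union {C C' : Set ι} {D D' : Set κ}
    (h : ClosedPair T C D) (h' : ClosedPair T C' D') :
    ClosedPair T (C ∪ C') (D ∪ D') := by
  constructor
  · rintro i (hi | hi) j hj
    · exact Or.inl (h.1 i hi j hj)
    · exact Or.inr (h'.1 i hi j hj)
  · rintro j (hj | hj) i hi
    · exact Or.inl (h.2 j hj i hi)
    · exact Or.inr (h'.2 j hj i hi)

lemma exists_closure (A₀ : Set ι) (B₀ : Set κ) (hA : A₀.Countable) (hB : B₀.Countable) :
    ∃ C D, A₀ ⊆ C ∧ B₀ ⊆ D ∧ C.Countable ∧ D.Countable ∧ ClosedPair T C D := by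
  set F := closeSeq T A₀ B₀ with hF
  have hcnt : ∀ n, (F n).1.Countable ∧ (F n).2.Countable := by
    intro n
    induction n with
    | zero => exact ⟨hA, hB⟩
    | succ n ih =>
      constructor
      · refine Set.Countable.union ih.1 ?_
        exact Set.Countable.biUnion ih.2 (fun j _ => (Finset.countable_toSet _))
      · refine Set.Countable.union ih.2 ?_
        exact Set.Countable.biUnion ih.1 (fun i _ => (Finset.countable_toSet _))
  refine ⟨⋃ n, (F n).1, ⋃ n, (F n).2, ?_, ?_, ?_, ?_, ?_, ?_⟩
  · exact Set.subset_iUnion (fun n => (F n).1) 0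
  · exact Set.subset_iUnion (fun n => (F n).2) 0
  · exact Set.countable_iUnion (fun n => (hcnt n).1)
  · exact Set.countable_iUnion (fun n => (hcnt n).2)
  · intro i hi j hj
    rw [Set.mem_iUnion] at hi
    obtain ⟨n, hn⟩ := hi
    apply Set.mem_iUnion.mpr ⟨n + 1, ?_⟩
    refine Or.inr ?_
    refine Set.mem_biUnion hn ?_
    exact Finset.mem_coe.mpr (Finsupp.mem_support_iff.mpr hj)
  · intro j hj i hi
    rw [Set.mem_iUnion] at hj
    obtain ⟨n, hn⟩ := hj
    apply Set.mem_iUnion.mpr ⟨n + 1, ?_⟩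
    refine Or.inr ?_
    refine Set.mem_biUnion hn ?_
    exact Finset.mem_coe.mpr (Finsupp.mem_support_iff.mpr hi)

end PMatch6

namespace PMatch7
open PMatch PMatch2 PMatch3 PMatch4 PMatch5 PMatch6

variable {K : Type*} [Field K] {ι : Type*} {κ : Type*}
variable (T : (ι →₀ K) ≃ₗ[K] (κ →₀ K))

lemma eq_empty_of_good_left {A : Set ι} {B : Set κ} (hG : GoodPair T A B) (hA : A = ∅) :
    B = ∅ := by
  by_contra hB
  obtain ⟨j, hj⟩ := Set.nonempty_iff_ne_empty.mpr hB
  obtain ⟨x, hx⟩ := hG.2 ⟨Finsupp.single j 1, Finsupp.single_mem_supported K 1 hj⟩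
  have hx0 : (x : ι →₀ K) = 0 := by
    have hsub : ↑((x : ι →₀ K)).support ⊆ (∅ : Set ι) := Set.Subset.trans x.2 hA.subset
    rw [Set.subset_empty_iff, Finset.coe_eq_empty] at hsub
    exact Finsupp.support_eq_empty.mp hsub
  have := Subtype.ext_iff.mp hx
  rw [Phi_coe, hx0, map_zero, Finsupp.filter_zero] at this
  have h1 := DFunLike.congr_fun this j
  simp [Finsupp.single_eq_same] at h1

lemma eq_empty_of_good_right {A : Set ι} {B : Set κ} (hG : GoodPair T A B) (hB : B = ∅) :
    A = ∅ := by
  by_contra hA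
  obtain ⟨i, hi⟩ := Set.nonempty_iff_ne_empty.mpr hA
  have hz : Phi T A B ⟨Finsupp.single i 1, Finsupp.single_mem_supported K 1 hi⟩ = 0 := by
    apply Subtype.ext
    have h2 : ↑((Phi T A B ⟨Finsupp.single i 1, Finsupp.single_mem_supported K 1 hi⟩ :
        Finsupp.supported K K B) : κ →₀ K).support ⊆ (∅ : Set κ) :=
      Set.Subset.trans (Phi T A B ⟨Finsupp.single i 1,
        Finsupp.single_mem_supported K 1 hi⟩).2 hB.subset
    rw [Set.subset_empty_iff, Finset.coe_eq_empty] at h2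
    simp [Finsupp.support_eq_empty.mp h2]
  have := hG.1 (hz.trans (map_zero _).symm)
  have h1 := Subtype.ext_iff.mp this
  simp only [ZeroMemClass.coe_zero] at h1
  have h2 := DFunLike.congr_fun h1 i
  simp [Finsupp.single_eq_same] at h2

/-- state: remaining ι set, remaining κ set, matched pairs -/
noncomputable def bfStep (eA : ℕ → ι) (eB : ℕ → κ) (n : ℕ)
    (st : Set ι × Set κ × Set (ι × κ)) : Set ι × Set κ × Set (ι × κ) :=
  if n % 2 = 0 then
    let i₀ := eA (n / 2)
    if h : i₀ ∈ st.1 ∧ GoodPair T st.1 st.2.1 then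
      (st.1 \ {i₀}, st.2.1 \ {(stepF T h.2 h.1).choose},
        insert (i₀, (stepF T h.2 h.1).choose) st.2.2)
    else st
  else
    let j₀ := eB (n / 2)
    if h : j₀ ∈ st.2.1 ∧ GoodPair T st.1 st.2.1 then
      (st.1 \ {(stepB T h.2 h.1).choose}, st.2.1 \ {j₀},
        insert ((stepB T h.2 h.1).choose, j₀) st.2.2)
    else st

noncomputable def bf (A : Set ι) (B : Set κ) (eA : ℕ → ι) (eB : ℕ → κ) : ℕ → Set ι × Set κ × Set (ι × κ)
  | 0 => (A, B, (∅ : Set (ι × κ)))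
  | n+1 => bfStep T eA eB n (bf A B eA eB n)

def Inv (A : Set ι) (B : Set κ) (st : Set ι × Set κ × Set (ι × κ)) : Prop :=
  st.1 ⊆ A ∧ st.2.1 ⊆ B ∧ GoodPair T st.1 st.2.1 ∧
  (∀ p ∈ st.2.2, p.1 ∈ A ∧ p.2 ∈ B ∧ T (Finsupp.single p.1 1) p.2 ≠ 0) ∧
  (∀ i, (i ∈ A ∧ i ∉ st.1) ↔ ∃ j, (i, j) ∈ st.2.2) ∧
  (∀ j, (j ∈ B ∧ j ∉ st.2.1) ↔ ∃ i, (i, j) ∈ st.2.2) ∧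
  (∀ p ∈ st.2.2, ∀ q ∈ st.2.2, p.1 = q.1 → p.2 = q.2) ∧
  (∀ p ∈ st.2.2, ∀ q ∈ st.2.2, p.2 = q.2 → p.1 = q.1)

lemma inv_insert {A : Set ι} {B : Set κ} {st : Set ι × Set κ × Set (ι × κ)}
    (hInv : Inv T A B st) {i₀ : ι} {j₀ : κ} (hi₀ : i₀ ∈ st.1) (hj₀ : j₀ ∈ st.2.1)
    (hM : T (Finsupp.single i₀ 1) j₀ ≠ 0)
    (hG' : GoodPair T (st.1 \ {i₀}) (st.2.1 \ {j₀})) :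
    Inv T A B (st.1 \ {i₀}, st.2.1 \ {j₀}, insert (i₀, j₀) st.2.2) := by
  obtain ⟨h1, h2, _, h4, h5, h6, h7, h8⟩ := hInv
  have hnoti : ∀ j, (i₀, j) ∉ st.2.2 := by
    intro j hj
    exact ((h5 i₀).mpr ⟨j, hj⟩).2 hi₀
  have hnotj : ∀ i, (i, j₀) ∉ st.2.2 := by
    intro i hi
    exact ((h6 j₀).mpr ⟨i, hi⟩).2 hj₀
  refine ⟨(Set.diff_subset).trans h1, (Set.diff_subset).trans h2, hG', ?_, ?_, ?_, ?_, ?_⟩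
  · rintro p (hp | hp)
    · rw [hp]
      exact ⟨h1 hi₀, h2 hj₀, hM⟩
    · exact h4 p hp
  · intro i
    constructor
    · rintro ⟨hiA, hi⟩
      by_cases hii : i = i₀
      · exact ⟨j₀, Or.inl (by rw [hii])⟩
      · have : i ∉ st.1 := fun hmem => hi ⟨hmem, hii⟩
        obtain ⟨j, hj⟩ := (h5 i).mp ⟨hiA, this⟩
        exact ⟨j, Or.inr hj⟩
    · rintro ⟨j, (hj | hj)⟩
      · have hij : i = i₀ ∧ j = j₀ := Prod.ext_iff.mp hj
        refine ⟨hij.1 ▸ h1 hi₀, ?_⟩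
        rw [hij.1]
        exact fun hmem => hmem.2 rfl
      · have := (h5 i).mpr ⟨j, hj⟩
        exact ⟨this.1, fun hmem => this.2 hmem.1⟩
  · intro j
    constructor
    · rintro ⟨hjB, hj⟩
      by_cases hjj : j = j₀
      · exact ⟨i₀, Or.inl (by rw [hjj])⟩
      · have : j ∉ st.2.1 := fun hmem => hj ⟨hmem, hjj⟩
        obtain ⟨i, hi⟩ := (h6 j).mp ⟨hjB, this⟩
        exact ⟨i, Or.inr hi⟩
    · rintro ⟨i, (hi | hi)⟩
      · have hij : i = i₀ ∧ j = j₀ := Prod.ext_iff.mp hi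
        refine ⟨hij.2 ▸ h2 hj₀, ?_⟩
        rw [hij.2]
        exact fun hmem => hmem.2 rfl
      · have := (h6 j).mpr ⟨i, hi⟩
        exact ⟨this.1, fun hmem => this.2 hmem.1⟩
  · rintro p (hp | hp) q (hq | hq) hpq
    · rw [hp, hq]
    · exfalso
      rw [hp] at hpq
      refine hnoti q.2 ?_
      have hq' : (q.1, q.2) ∈ st.2.2 := by simpa using hq
      rwa [← (show i₀ = q.1 from hpq)] at hq'
    · exfalso
      rw [hq] at hpq
      refine hnoti p.2 ?_
      have hp' : (p.1, p.2) ∈ st.2.2 := by simpa using hp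
      rwa [show p.1 = i₀ from hpq] at hp'
    · exact h7 p hp q hq hpq
  · rintro p (hp | hp) q (hq | hq) hpq
    · rw [hp, hq]
    · exfalso
      rw [hp] at hpq
      refine hnotj q.1 ?_
      have hq' : (q.1, q.2) ∈ st.2.2 := by simpa using hq
      rwa [← (show j₀ = q.2 from hpq)] at hq'
    · exfalso
      rw [hq] at hpq
      refine hnotj p.1 ?_
      have hp' : (p.1, p.2) ∈ st.2.2 := by simpa using hp
      rwa [show p.2 = j₀ from hpq] at hp'
    · exact h8 p hp q hq hpq

end PMatch7

namespace PMatch8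
open PMatch PMatch2 PMatch3 PMatch4 PMatch5 PMatch6 PMatch7

variable {K : Type*} [Field K] {ι : Type*} {κ : Type*}
variable (T : (ι →₀ K) ≃ₗ[K] (κ →₀ K))

lemma inv_bfStep {A : Set ι} {B : Set κ} (eA : ℕ → ι) (eB : ℕ → κ) (n : ℕ)
    {st : Set ι × Set κ × Set (ι × κ)} (h : Inv T A B st) :
    Inv T A B (bfStep T eA eB n st) := by
  unfold bfStep
  by_cases hpar : n % 2 = 0
  · rw [if_pos hpar]
    by_cases hc : eA (n / 2) ∈ st.1 ∧ GoodPair T st.1 st.2.1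
    · rw [dif_pos hc]
      have spec := (stepF T hc.2 hc.1).choose_spec
      exact inv_insert T h hc.1 spec.1 spec.2.1 spec.2.2
    · rw [dif_neg hc]; exact h
  · rw [if_neg hpar]
    by_cases hc : eB (n / 2) ∈ st.2.1 ∧ GoodPair T st.1 st.2.1
    · rw [dif_pos hc]
      have spec := (stepB T hc.2 hc.1).choose_spec
      exact inv_insert T h spec.1 hc.1 spec.2.1 spec.2.2
    · rw [dif_neg hc]; exact h

lemma inv_bf {A : Set ι} {B : Set κ} (eA : ℕ → ι) (eB : ℕ → κ) (hG : GoodPair T A B) :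
    ∀ n, Inv T A B (bf T A B eA eB n) := by
  intro n
  induction n with
  | zero =>
    refine ⟨Set.Subset.refl A, Set.Subset.refl B, hG, ?_, ?_, ?_, ?_, ?_⟩
    · rintro p hp; exact absurd hp (Set.notMem_empty p)
    · intro i
      constructor
      · rintro ⟨hi, hni⟩; exact absurd hi hni
      · rintro ⟨j, hj⟩; exact absurd hj (Set.notMem_empty _)
    · intro j
      constructor
      · rintro ⟨hj, hnj⟩; exact absurd hj hnj
      · rintro ⟨i, hi⟩; exact absurd hi (Set.notMem_empty _)
    · rintro p hp; exact absurd hp (Set.notMem_empty p)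
    · rintro p hp; exact absurd hp (Set.notMem_empty p)
  | succ n ih => exact inv_bfStep T eA eB n ih

lemma bfStep_mono (eA : ℕ → ι) (eB : ℕ → κ) (n : ℕ) (st : Set ι × Set κ × Set (ι × κ)) :
    st.2.2 ⊆ (bfStep T eA eB n st).2.2 ∧ (bfStep T eA eB n st).1 ⊆ st.1 ∧
      (bfStep T eA eB n st).2.1 ⊆ st.2.1 := by
  unfold bfStep
  by_cases hpar : n % 2 = 0
  · rw [if_pos hpar]
    by_cases hc : eA (n / 2) ∈ st.1 ∧ GoodPair T st.1 st.2.1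
    · rw [dif_pos hc]
      exact ⟨Set.subset_insert _ _, Set.diff_subset, Set.diff_subset⟩
    · rw [dif_neg hc]
      exact ⟨Set.Subset.refl _, Set.Subset.refl _, Set.Subset.refl _⟩
  · rw [if_neg hpar]
    by_cases hc : eB (n / 2) ∈ st.2.1 ∧ GoodPair T st.1 st.2.1
    · rw [dif_pos hc]
      exact ⟨Set.subset_insert _ _, Set.diff_subset, Set.diff_subset⟩
    · rw [dif_neg hc]
      exact ⟨Set.Subset.refl _, Set.Subset.refl _, Set.Subset.refl _⟩

lemma bf_mono_le {A : Set ι} {B : Set κ} (eA : ℕ → ι) (eB : ℕ → κ) {m n : ℕ} (h : m ≤ n) :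
    (bf T A B eA eB m).2.2 ⊆ (bf T A B eA eB n).2.2 := by
  induction n with
  | zero => rw [Nat.le_zero.mp h]
  | succ n ih =>
    rcases Nat.lt_or_ge m (n+1) with hlt | hge
    · exact (ih (Nat.lt_succ_iff.mp hlt)).trans
        (show (bf T A B eA eB n).2.2 ⊆ (bf T A B eA eB (n+1)).2.2 from
          (bfStep_mono T eA eB n (bf T A B eA eB n)).1)
    · rw [Nat.le_antisymm h hge]

lemma bf_coverA {A : Set ι} {B : Set κ} (eA : ℕ → ι) (eB : ℕ → κ) (hG : GoodPair T A B)
    (m : ℕ) : eA m ∉ (bf T A B eA eB (2*m+1)).1 := by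
  have hInv := inv_bf T eA eB hG (2*m)
  show eA m ∉ (bfStep T eA eB (2*m) (bf T A B eA eB (2*m))).1
  unfold bfStep
  rw [if_pos (by omega : (2*m) % 2 = 0)]
  have he : eA ((2*m)/2) = eA m := congrArg eA (by omega)
  by_cases hc : eA ((2*m)/2) ∈ (bf T A B eA eB (2*m)).1 ∧
      GoodPair T (bf T A B eA eB (2*m)).1 (bf T A B eA eB (2*m)).2.1
  · rw [dif_pos hc]
    intro hmem
    exact hmem.2 (he.symm ▸ rfl)
  · rw [dif_neg hc]
    intro hmem
    exact hc ⟨he.symm ▸ hmem, hInv.2.2.1⟩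

lemma bf_coverB {A : Set ι} {B : Set κ} (eA : ℕ → ι) (eB : ℕ → κ) (hG : GoodPair T A B)
    (m : ℕ) : eB m ∉ (bf T A B eA eB (2*m+2)).2.1 := by
  have hInv := inv_bf T eA eB hG (2*m+1)
  show eB m ∉ (bfStep T eA eB (2*m+1) (bf T A B eA eB (2*m+1))).2.1
  unfold bfStep
  rw [if_neg (by omega : ¬ (2*m+1) % 2 = 0)]
  have he : eB ((2*m+1)/2) = eB m := congrArg eB (by omega)
  by_cases hc : eB ((2*m+1)/2) ∈ (bf T A B eA eB (2*m+1)).2.1 ∧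
      GoodPair T (bf T A B eA eB (2*m+1)).1 (bf T A B eA eB (2*m+1)).2.1
  · rw [dif_pos hc]
    intro hmem
    exact hmem.2 (he.symm ▸ rfl)
  · rw [dif_neg hc]
    intro hmem
    exact hc ⟨he.symm ▸ hmem, hInv.2.2.1⟩

theorem countable_matching {A : Set ι} {B : Set κ} (hA : A.Countable) (hB : B.Countable)
    (hG : GoodPair T A B) :
    ∃ R : Set (ι × κ),
      (∀ p ∈ R, p.1 ∈ A ∧ p.2 ∈ B ∧ T (Finsupp.single p.1 1) p.2 ≠ 0) ∧
      (∀ i ∈ A, ∃ j, (i, j) ∈ R) ∧ (∀ j ∈ B, ∃ i, (i, j) ∈ R) ∧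
      (∀ p ∈ R, ∀ q ∈ R, p.1 = q.1 → p.2 = q.2) ∧
      (∀ p ∈ R, ∀ q ∈ R, p.2 = q.2 → p.1 = q.1) := by
  rcases Set.eq_empty_or_nonempty A with hAe | hAne
  · have hBe := eq_empty_of_good_left T hG hAe
    refine ⟨∅, ?_, ?_, ?_, ?_, ?_⟩
    · rintro p hp; exact absurd hp (Set.notMem_empty p)
    · intro i hi; rw [hAe] at hi; exact absurd hi (Set.notMem_empty i)
    · intro j hj; rw [hBe] at hj; exact absurd hj (Set.notMem_empty j)
    · rintro p hp; exact absurd hp (Set.notMem_empty p)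
    · rintro p hp; exact absurd hp (Set.notMem_empty p)
  have hBne : B.Nonempty := by
    rcases Set.eq_empty_or_nonempty B with hBe | hBne
    · exact absurd (eq_empty_of_good_right T hG hBe) (Set.nonempty_iff_ne_empty.mp hAne)
    · exact hBne
  obtain ⟨eA, hEA⟩ := Set.Countable.exists_eq_range hA hAne
  obtain ⟨eB, hEB⟩ := Set.Countable.exists_eq_range hB hBne
  have hInv := inv_bf T eA eB hG
  refine ⟨⋃ n, (bf T A B eA eB n).2.2, ?_, ?_, ?_, ?_, ?_⟩
  · intro p hp
    obtain ⟨n, hn⟩ := Set.mem_iUnion.mp hp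
    exact (hInv n).2.2.2.1 p hn
  · intro i hi
    rw [hEA] at hi
    obtain ⟨m, hm⟩ := hi
    have hcov := bf_coverA T eA eB hG m
    rw [hm] at hcov
    have := ((hInv (2*m+1)).2.2.2.2.1 i).mp ⟨by rw [hEA]; exact ⟨m, hm⟩, hcov⟩
    obtain ⟨j, hj⟩ := this
    exact ⟨j, Set.mem_iUnion.mpr ⟨2*m+1, hj⟩⟩
  · intro j hj
    rw [hEB] at hj
    obtain ⟨m, hm⟩ := hj
    have hcov := bf_coverB T eA eB hG m
    rw [hm] at hcov
    have := ((hInv (2*m+2)).2.2.2.2.2.1 j).mp ⟨by rw [hEB]; exact ⟨m, hm⟩, hcov⟩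
    obtain ⟨i, hi⟩ := this
    exact ⟨i, Set.mem_iUnion.mpr ⟨2*m+2, hi⟩⟩
  · intro p hp q hq hpq
    obtain ⟨m, hm⟩ := Set.mem_iUnion.mp hp
    obtain ⟨n, hn⟩ := Set.mem_iUnion.mp hq
    rcases Nat.le_total m n with h | h
    · exact (hInv n).2.2.2.2.2.2.1 p (bf_mono_le T eA eB h hm) q hn hpq
    · exact (hInv m).2.2.2.2.2.2.1 p hm q (bf_mono_le T eA eB h hn) hpq
  · intro p hp q hq hpq
    obtain ⟨m, hm⟩ := Set.mem_iUnion.mp hp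
    obtain ⟨n, hn⟩ := Set.mem_iUnion.mp hq
    rcases Nat.le_total m n with h | h
    · exact (hInv n).2.2.2.2.2.2.2 p (bf_mono_le T eA eB h hm) q hn hpq
    · exact (hInv m).2.2.2.2.2.2.2 p hm q (bf_mono_le T eA eB h hn) hpq

end PMatch8

namespace PMatch9
open PMatch PMatch2 PMatch3 PMatch4 PMatch5 PMatch6 PMatch7 PMatch8

variable {K : Type*} [Field K] {ι : Type*} {κ : Type*}
variable (T : (ι →₀ K) ≃ₗ[K] (κ →₀ K))

def MProp (R : Set (ι × κ)) : Prop :=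
  (∀ p ∈ R, T (Finsupp.single p.1 1) p.2 ≠ 0) ∧
  (∀ p ∈ R, ∀ q ∈ R, p.1 = q.1 → p.2 = q.2) ∧
  (∀ p ∈ R, ∀ q ∈ R, p.2 = q.2 → p.1 = q.1) ∧
  ClosedPair T {i | ∃ j, (i, j) ∈ R} {j | ∃ i, (i, j) ∈ R}

lemma extend {R : Set (ι × κ)} (hR : MProp T R) (A₀ : Set ι) (B₀ : Set κ)
    (hA₀ : A₀.Countable) (hB₀ : B₀.Countable) :
    ∃ R' : Set (ι × κ), R ⊆ R' ∧ MProp T R' ∧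
      A₀ ⊆ {i | ∃ j, (i, j) ∈ R'} ∧ B₀ ⊆ {j | ∃ i, (i, j) ∈ R'} := by
  classical
  set C := {i | ∃ j, (i, j) ∈ R} with hC
  set D := {j | ∃ i, (i, j) ∈ R} with hD
  obtain ⟨C₀, D₀, hseedA, hseedB, hcntC, hcntD, hcl₀⟩ := exists_closure T A₀ B₀ hA₀ hB₀
  have hclCD : ClosedPair T C D := hR.2.2.2
  have hcl' : ClosedPair T (C ∪ C₀) (D ∪ D₀) := closed_union T hclCD hcl₀
  have hgood : GoodPair T ((C ∪ C₀) \ C) ((D ∪ D₀) \ D) :=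
    goodPair_diff T hclCD hcl' Set.subset_union_left Set.subset_union_left
  have hcnt1 : ((C ∪ C₀) \ C).Countable := by
    refine hcntC.mono ?_
    rintro i ⟨(hi | hi), hni⟩
    · exact absurd hi hni
    · exact hi
  have hcnt2 : ((D ∪ D₀) \ D).Countable := by
    refine hcntD.mono ?_
    rintro j ⟨(hj | hj), hnj⟩
    · exact absurd hj hnj
    · exact hj
  obtain ⟨R₁, hp1, htotA, htotB, hf1, hf2⟩ := countable_matching T hcnt1 hcnt2 hgood
  refine ⟨R ∪ R₁, Set.subset_union_left, ?_, ?_, ?_⟩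
  · have hdom : {i | ∃ j, (i, j) ∈ R ∪ R₁} = C ∪ C₀ := by
      ext i
      constructor
      · rintro ⟨j, (hj | hj)⟩
        · exact Or.inl ⟨j, hj⟩
        · exact ((hp1 (i, j) hj).1).1
      · intro hi
        by_cases hiC : i ∈ C
        · obtain ⟨j, hj⟩ := hiC
          exact ⟨j, Or.inl hj⟩
        · obtain ⟨j, hj⟩ := htotA i ⟨hi, hiC⟩
          exact ⟨j, Or.inr hj⟩
    have hran : {j | ∃ i, (i, j) ∈ R ∪ R₁} = D ∪ D₀ := by
      ext j
      constructor
      · rintro ⟨i, (hi | hi)⟩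
        · exact Or.inl ⟨i, hi⟩
        · exact ((hp1 (i, j) hi).2).1.1
      · intro hj
        by_cases hjD : j ∈ D
        · obtain ⟨i, hi⟩ := hjD
          exact ⟨i, Or.inl hi⟩
        · obtain ⟨i, hi⟩ := htotB j ⟨hj, hjD⟩
          exact ⟨i, Or.inr hi⟩
    refine ⟨?_, ?_, ?_, ?_⟩
    · rintro p (hp | hp)
      · exact hR.1 p hp
      · exact (hp1 p hp).2.2
    · rintro p (hp | hp) q (hq | hq) hpq
      · exact hR.2.1 p hp q hq hpq
      · exact absurd (hpq ▸ (hp1 q hq).1.2) (fun hc => hc ⟨p.2, hp⟩)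
      · exact absurd (hpq ▸ (hp1 p hp).1.2) (fun hc => hc ⟨q.2, hq⟩)
      · exact hf1 p hp q hq hpq
    · rintro p (hp | hp) q (hq | hq) hpq
      · exact hR.2.2.1 p hp q hq hpq
      · exact absurd (hpq ▸ (hp1 q hq).2.1.2) (fun hc => hc ⟨p.1, hp⟩)
      · exact absurd (hpq ▸ (hp1 p hp).2.1.2) (fun hc => hc ⟨q.1, hq⟩)
      · exact hf2 p hp q hq hpq
    · rw [hdom, hran]
      exact hcl'
  · intro i hi
    by_cases hiC : i ∈ C
    · obtain ⟨j, hj⟩ := hiC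
      exact ⟨j, Or.inl hj⟩
    · obtain ⟨j, hj⟩ := htotA i ⟨Or.inr (hseedA hi), hiC⟩
      exact ⟨j, Or.inr hj⟩
  · intro j hj
    by_cases hjD : j ∈ D
    · obtain ⟨i, hi⟩ := hjD
      exact ⟨i, Or.inl hi⟩
    · obtain ⟨i, hi⟩ := htotB j ⟨Or.inr (hseedB hj), hjD⟩
      exact ⟨i, Or.inr hi⟩

end PMatch9

namespace PMatch10
open PMatch PMatch2 PMatch3 PMatch4 PMatch5 PMatch6 PMatch7 PMatch8 PMatch9

variable {K : Type*} [Field K] {ι : Type*} {κ : Type*}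
variable (T : (ι →₀ K) ≃ₗ[K] (κ →₀ K))

theorem matching_equiv : ∃ σ : ι ≃ κ, ∀ i, T (Finsupp.single i 1) (σ i) ≠ 0 := by
  classical
  have hempty : MProp T (∅ : Set (ι × κ)) := by
    refine ⟨?_, ?_, ?_, ?_, ?_⟩
    · rintro p hp; exact absurd hp (Set.notMem_empty p)
    · rintro p hp; exact absurd hp (Set.notMem_empty p)
    · rintro p hp; exact absurd hp (Set.notMem_empty p)
    · rintro i ⟨j, hj⟩; exact absurd hj (Set.notMem_empty _)
    · rintro j ⟨i, hi⟩; exact absurd hi (Set.notMem_empty _)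
  have hchain : ∀ c ⊆ {R : Set (ι × κ) | MProp T R}, IsChain (· ⊆ ·) c → c.Nonempty →
      ∃ ub ∈ {R : Set (ι × κ) | MProp T R}, ∀ s ∈ c, s ⊆ ub := by
    intro c hc hch hne
    refine ⟨⋃₀ c, ⟨?_, ?_, ?_, ?_, ?_⟩, fun s hs => Set.subset_sUnion_of_mem hs⟩
    · rintro p ⟨s, hs, hp⟩
      exact (hc hs).1 p hp
    · rintro p ⟨s, hs, hp⟩ q ⟨t, ht, hq⟩ hpq
      rcases eq_or_ne s t with rfl | hst
      · exact (hc hs).2.1 p hp q hq hpq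
      rcases hch.total hs ht with h | h
      · exact (hc ht).2.1 p (h hp) q hq hpq
      · exact (hc hs).2.1 p hp q (h hq) hpq
    · rintro p ⟨s, hs, hp⟩ q ⟨t, ht, hq⟩ hpq
      rcases eq_or_ne s t with rfl | hst
      · exact (hc hs).2.2.1 p hp q hq hpq
      rcases hch.total hs ht with h | h
      · exact (hc ht).2.2.1 p (h hp) q hq hpq
      · exact (hc hs).2.2.1 p hp q (h hq) hpq
    · rintro i ⟨j, hij⟩ j' hj'
      obtain ⟨s, hs, hp⟩ := hij
      obtain ⟨i2, hi2⟩ := ((hc hs).2.2.2).1 i ⟨j, hp⟩ j' hj'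
      exact ⟨i2, ⟨s, hs, hi2⟩⟩
    · rintro j ⟨i, hij⟩ i' hi'
      obtain ⟨s, hs, hp⟩ := hij
      obtain ⟨j2, hj2⟩ := ((hc hs).2.2.2).2 j ⟨i, hp⟩ i' hi'
      exact ⟨j2, ⟨s, hs, hj2⟩⟩
  obtain ⟨Rm, -, hmax⟩ := zorn_subset_nonempty {R : Set (ι × κ) | MProp T R} hchain ∅ hempty
  have hMm : MProp T Rm := hmax.prop
  have htotA : ∀ i, ∃ j, (i, j) ∈ Rm := by
    intro i
    by_contra hni
    push_neg at hni
    obtain ⟨R', hsub, hM', hA', -⟩ :=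
      extend T hMm {i} (∅ : Set κ) (Set.countable_singleton i) Set.countable_empty
    have hR'le : R' ⊆ Rm := hmax.le_of_ge hM' hsub
    obtain ⟨j, hj⟩ := hA' (Set.mem_singleton i)
    exact hni j (hR'le hj)
  have htotB : ∀ j, ∃ i, (i, j) ∈ Rm := by
    intro j
    by_contra hnj
    push_neg at hnj
    obtain ⟨R', hsub, hM', -, hB'⟩ :=
      extend T hMm (∅ : Set ι) {j} Set.countable_empty (Set.countable_singleton j)
    have hR'le : R' ⊆ Rm := hmax.le_of_ge hM' hsub
    obtain ⟨i, hi⟩ := hB' (Set.mem_singleton j)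
    exact hnj i (hR'le hi)
  choose f hf using htotA
  choose g hg using htotB
  have hgf : ∀ i, g (f i) = i := by
    intro i
    exact hMm.2.2.1 (g (f i), f i) (hg (f i)) (i, f i) (hf i) rfl
  have hfg : ∀ j, f (g j) = j := by
    intro j
    exact hMm.2.1 (g j, f (g j)) (hf (g j)) (g j, j) (hg j) rfl
  exact ⟨⟨f, g, hgf, hfg⟩, fun i => hMm.1 (i, f i) (hf i)⟩

end PMatch10

/-- Let `V`, `W` be vector spaces of arbitrary (possibly infinite) dimension over a field `K`
with specified bases (of arbitrary cardinality) `bV : ι → V` and `bW : κ → W`, and let `T : V ≃ₗ[K] W`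
be a linear isomorphism.  The coefficient graph of `T` (with an edge from `v ∈ 𝒱` to
`w ∈ 𝒲` whenever the `w`-coefficient of `T v` is nonzero) admits a perfect matching;
equivalently, there is a bijection `σ : ι ≃ κ` such that for every `i`, the
`σ i`-coefficient of `T (bV i)` in the basis `bW` is nonzero. -/
theorem coefficient_graph_of_iso_has_perfect_matching_infinite
    (K V W : Type*) [Field K] [AddCommGroup V] [Module K V]
    [AddCommGroup W] [Module K W]
    (ι κ : Type*) 
    (bV : Module.Basis ι K V) (bW : Module.Basis κ K W) (T : V ≃ₗ[K] W) :
    ∃ σ : ι ≃ κ, ∀ i : ι, bW.repr (T (bV i)) (σ i) ≠ 0 := by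
  obtain ⟨σ, hσ⟩ := PMatch10.matching_equiv
    ((bV.repr.symm.trans T).trans bW.repr)
  refine ⟨σ, fun i => ?_⟩
  have := hσ i
  rwa [LinearEquiv.trans_apply, LinearEquiv.trans_apply, Module.Basis.repr_symm_single_one] at this
end

section
/- Let ⋯ ← V_i ← V_{i+1} ← ⋯ be a long exact sequence of finite-dimensional vector spaces with differentials δ, bounded (only finitely many V_i nonzero), and with a fixed basis 𝒱_i of each V_i. Define the coefficient graph with vertex set ⊔_i 𝒱_i and an edge v' ← v (for v ∈ 𝒱_{i+1}, v' ∈ 𝒱_i) whenever δ(v) has a nonzero v'-coefficient. Then this graph admits a perfect matching. -/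
/-- The coefficient-graph edge relation for a complex of based vector spaces
`V i = ι i →₀ K` (with the standard bases) and differentials
`δ i : V (i+1) →ₗ[K] V i`: there is an edge `v' ← v`, for `v` a basis vector of
`V (i+1)` and `v'` a basis vector of `V i`, whenever `δ i v` has a nonzero
`v'`-coefficient. -/
def CoeffEdge (K : Type*) [Field K] (ι : ℤ → Type*)
    (δ : ∀ i : ℤ, (ι (i + 1) →₀ K) →ₗ[K] (ι i →₀ K)) :
    (Σ i : ℤ, ι i) → (Σ i : ℤ, ι i) → Prop :=
  fun v w => ∃ h : v.1 = w.1 + 1,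
    (δ w.1 (Finsupp.single (cast (congrArg ι h) v.2) 1)) w.2 ≠ 0


open Matrix in
lemma det_matching {K : Type*} [Field K] {n : Type*} [Fintype n] [DecidableEq n]
    (M : Matrix n n K) (h : M.det ≠ 0) : ∃ σ : Equiv.Perm n, ∀ j, M (σ j) j ≠ 0 := by
  by_contra hc
  push_neg at hc
  apply h
  rw [Matrix.det_apply]
  refine Finset.sum_eq_zero fun σ _ => ?_
  obtain ⟨j, hj⟩ := hc σ
  refine smul_eq_zero_of_right _ ?_
  exact Finset.prod_eq_zero (Finset.mem_univ j) hj

open Matrix in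
set_option maxHeartbeats 1000000 in
set_option synthInstance.maxHeartbeats 400000 in
lemma exists_rows {K : Type*} [Field K] {α β : Type*} [Fintype α] [Fintype β]
    (c : β → (α →₀ K)) (hc : LinearIndependent K c) :
    ∃ (A : Finset α) (σ : β ≃ ↥A),
      (∀ b, c b ↑(σ b) ≠ 0) ∧
      ∀ x ∈ Submodule.span K (Set.range c), (∀ a ∈ A, x a = 0) → x = 0 := by
  classical
  haveI : FiniteDimensional K (α →₀ K) :=
    Module.Finite.equiv (Finsupp.linearEquivFunOnFinite K K α).symm
  set S := Submodule.span K (Set.range c) with hS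
  let g : S →ₗ[K] (α → K) := (Finsupp.lcoeFun (M := K)).comp S.subtype
  have hg : Function.Injective g := by
    intro x y hxy
    exact Subtype.ext (DFunLike.coe_injective (by exact hxy))
  have hsurj : Function.Surjective g.dualMap :=
    LinearMap.dualMap_surjective_of_injective (V₁ := S) (V₂ := α → K) (f := g) hg
  -- projections span the dual of (α → K)
  have hproj : Submodule.span K
      (Set.range fun a : α => (LinearMap.proj a : (α → K) →ₗ[K] K)) = ⊤ := by
    rw [eq_top_iff]
    rintro φ -
    have hφ : φ = ∑ a : α, φ (Pi.single a 1) • LinearMap.proj a := by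
      apply (Pi.basisFun K α).ext
      intro b
      simp [Pi.basisFun_apply, Pi.single_apply]
    rw [hφ]
    exact Submodule.sum_mem _ fun a _ =>
      Submodule.smul_mem _ _ (Submodule.subset_span ⟨a, rfl⟩)
  set f : α → Module.Dual K S := fun a => g.dualMap (LinearMap.proj a) with hf
  have hspanf : Submodule.span K (Set.range f) = ⊤ := by
    have hr : Set.range f
        = g.dualMap '' Set.range (fun a : α => (LinearMap.proj a : (α → K) →ₗ[K] K)) := by
      rw [← Set.range_comp]; rfl
    rw [hr, Submodule.span_image, hproj, Submodule.map_top,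
      LinearMap.range_eq_top.mpr hsurj]
  haveI : FiniteDimensional K S := inferInstance
  haveI : Module.Free K ↥S := Module.Free.of_divisionRing K ↥S
  haveI : Module.Projective K ↥S := inferInstance
  haveI : FiniteDimensional K (Module.Dual K S) := by
    exact Subspace.instModuleDualFiniteDimensional (K := K) (V := ↥S)
  obtain ⟨t, htsub, htspan, htind⟩ := exists_linearIndependent K (Set.range f)
  rw [hspanf] at htspan
  have htfin : t.Finite := htind.setFinite
  haveI := htfin.fintype
  -- basis of the dual
  let bas : Module.Basis ↥t K (Module.Dual K S) := Module.Basis.mk htind (by rw [Subtype.range_coe, htspan])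
  have hcardt : Fintype.card ↥t = Fintype.card β := by
    have h1 : Module.finrank K (Module.Dual K S) = Fintype.card ↥t :=
      Module.finrank_eq_card_basis bas
    have h2 : Module.finrank K (Module.Dual K S) = Module.finrank K S :=
      by exact Subspace.dual_finrank_eq (K := K) (V := ↥S)
    have h3 : Module.finrank K S = Fintype.card β := by
      rw [hS]; exact finrank_span_eq_card hc
    omega
  -- section of f over t
  have hsec : ∀ τ : ↥t, ∃ a : α, f a = ↑τ := fun τ => htsub τ.2
  choose sec hsec' using hsec
  have hsecinj : Function.Injective sec := by
    intro τ₁ τ₂ h12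
    apply Subtype.ext
    rw [← hsec' τ₁, ← hsec' τ₂, h12]
  set A : Finset α := Finset.univ.image sec with hA
  have hcardA : Fintype.card ↥A = Fintype.card β := by
    rw [Fintype.card_coe, hA, Finset.card_image_of_injective _ hsecinj, Finset.card_univ, hcardt]
  -- the key vanishing property
  have hP : ∀ x ∈ S, (∀ a ∈ A, x a = 0) → x = 0 := by
    intro x hx hvan
    have hall : ∀ φ : Module.Dual K S, φ ⟨x, hx⟩ = 0 := by
      intro φ
      have hφt : φ ∈ Submodule.span K t := by rw [htspan]; trivial
      have : Submodule.span K t ≤ LinearMap.ker (Module.Dual.eval K S (⟨x, hx⟩ : S)) := by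
        rw [Submodule.span_le]
        intro ψ hψ
        have hψ2 : f (sec ⟨ψ, hψ⟩) = ψ := hsec' ⟨ψ, hψ⟩
        simp only [SetLike.mem_coe, LinearMap.mem_ker, Module.Dual.eval_apply]
        rw [← hψ2]
        have : sec ⟨ψ, hψ⟩ ∈ A := by
          rw [hA]; exact Finset.mem_image_of_mem _ (Finset.mem_univ _)
        exact hvan _ this
      exact this hφt
    have := (Module.forall_dual_apply_eq_zero_iff K (⟨x, hx⟩ : S)).mp hall
    exact congrArg Subtype.val this
  refine ⟨A, ?_⟩
  -- build the square matrix and extract a permutation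
  let e : ↥A ≃ β := Fintype.equivOfCardEq hcardA
  set M : Matrix β β K := fun r b => c b (e.symm r).1 with hM
  have hinj : ∀ t0 : β → K, M *ᵥ t0 = 0 → t0 = 0 := by
    intro t0 ht0
    have hx : (∑ b : β, t0 b • c b) = 0 := by
      apply hP _ (Submodule.sum_mem _ fun b _ =>
        Submodule.smul_mem _ _ (Submodule.subset_span ⟨b, rfl⟩))
      intro a ha
      have := congrFun ht0 (e ⟨a, ha⟩)
      simp only [Matrix.mulVec, dotProduct, hM, Equiv.symm_apply_apply] at this
      simpa [Finsupp.finset_sum_apply, mul_comm] using this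
    have := Fintype.linearIndependent_iff.mp hc t0 hx
    funext b; exact this b
  have hdet : M.det ≠ 0 := by
    intro hdet0
    obtain ⟨v, hv, hv0⟩ := Matrix.exists_mulVec_eq_zero_iff.mpr hdet0
    exact hv (hinj v hv0)
  obtain ⟨σ0, hσ0⟩ := det_matching M hdet
  refine ⟨(Equiv.refl β).trans ((σ0 : Equiv.Perm β).trans e.symm), fun b => ?_, hP⟩
  simpa [hM] using hσ0 b


section Machinery
set_option linter.unusedSectionVars false
open scoped Classical

variable {K : Type*} [Field K] {ι : ℤ → Type*} [∀ i, Fintype (ι i)]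

/-- Covered vertices at stage `i` with frontier `B`. -/
def Cov (i : ℤ) (B : Finset (ι (i+1))) (v : Σ j, ι j) : Prop :=
  i + 1 < v.1 ∨ ∃ h : v.1 = i + 1, cast (congrArg ι h) v.2 ∉ B

/-- The invariant of the descending induction. -/
def Q (δ : ∀ i : ℤ, (ι (i + 1) →₀ K) →ₗ[K] (ι i →₀ K)) (i : ℤ) : Prop :=
  ∃ B : Finset (ι (i+1)),
    LinearIndependent K (fun b : ↥B => δ i (Finsupp.single (b : ι (i+1)) 1)) ∧
    Submodule.span K (Set.range fun b : ↥B => δ i (Finsupp.single (b : ι (i+1)) 1))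
      = LinearMap.range (δ i) ∧
    ∃ m : (Σ j, ι j) → (Σ j, ι j),
      ∀ v, Cov i B v → m (m v) = v ∧ m v ≠ v ∧
        (CoeffEdge K ι δ v (m v) ∨ CoeffEdge K ι δ (m v) v) ∧ Cov i B (m v)

/-- Extension of a partial matching by the pairing `σ` between `B` (level `i+2`)
and `A` (level `i+1`). -/
noncomputable def mExt (i : ℤ) (B : Finset (ι (i+1+1))) (A : Finset (ι (i+1)))
    (σ : ↥B ≃ ↥A) (m : (Σ j, ι j) → (Σ j, ι j)) : (Σ j, ι j) → (Σ j, ι j) :=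
  fun v =>
    if h : v.1 = i+1+1 then
      (if hb : (cast (congrArg ι h) v.2) ∈ B then ⟨i+1, (σ ⟨_, hb⟩ : ι (i+1))⟩ else m v)
    else if h2 : v.1 = i+1 then
      (if ha : (cast (congrArg ι h2) v.2) ∈ A then ⟨i+1+1, (σ.symm ⟨_, ha⟩ : ι (i+1+1))⟩ else m v)
    else m v

variable {i : ℤ} {B : Finset (ι (i+1+1))} {A : Finset (ι (i+1))}
  {σ : ↥B ≃ ↥A} {m : (Σ j, ι j) → (Σ j, ι j)}

lemma mExt_top (b : ι (i+1+1)) (hb : b ∈ B) :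
    mExt i B A σ m ⟨i+1+1, b⟩ = ⟨i+1, (σ ⟨b, hb⟩ : ι (i+1))⟩ := by
  simp [mExt, hb]

lemma mExt_top_not (b : ι (i+1+1)) (hb : b ∉ B) :
    mExt i B A σ m ⟨i+1+1, b⟩ = m ⟨i+1+1, b⟩ := by
  simp [mExt, hb]

lemma mExt_mid (a : ι (i+1)) (ha : a ∈ A) :
    mExt i B A σ m ⟨i+1, a⟩ = ⟨i+1+1, (σ.symm ⟨a, ha⟩ : ι (i+1+1))⟩ := by
  have hne : ¬ ((i+1 : ℤ) = i+1+1) := by omega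
  simp [mExt, hne, ha]

lemma mExt_mid_not (a : ι (i+1)) (ha : a ∉ A) :
    mExt i B A σ m ⟨i+1, a⟩ = m ⟨i+1, a⟩ := by
  have hne : ¬ ((i+1 : ℤ) = i+1+1) := by omega
  simp [mExt, hne, ha]

lemma mExt_other (v : Σ j, ι j) (h1 : v.1 ≠ i+1+1) (h2 : v.1 ≠ i+1) :
    mExt i B A σ m v = m v := by
  simp [mExt, h1, h2]



variable (δ : ∀ i : ℤ, (ι (i + 1) →₀ K) →ₗ[K] (ι i →₀ K))

set_option maxHeartbeats 1000000 in
lemma step (hexact : ∀ i : ℤ, LinearMap.range (δ (i + 1)) = LinearMap.ker (δ i))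
    (i : ℤ) (h : Q δ (i+1)) : Q δ i := by
  classical
  haveI : ∀ j : ℤ, FiniteDimensional K (ι j →₀ K) := fun j =>
    Module.Finite.equiv (Finsupp.linearEquivFunOnFinite K K (ι j)).symm
  obtain ⟨B, hind, hspan, m, hm⟩ := h
  obtain ⟨A, σ, hedge, hP⟩ :=
    exists_rows (fun b : ↥B => δ (i+1) (Finsupp.single (b : ι (i+1+1)) 1)) hind
  have hker : LinearMap.ker (δ i)
      = Submodule.span K (Set.range fun b : ↥B => δ (i+1) (Finsupp.single (b : ι (i+1+1)) 1)) := by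
    rw [hspan]; exact (hexact i).symm
  set B' : Finset (ι (i+1)) := Finset.univ \ A with hB'
  have hmemB' : ∀ a : ι (i+1), a ∈ B' ↔ a ∉ A := by intro a; simp [hB']
  -- independence of the new columns
  have hind' : LinearIndependent K (fun b : ↥B' => δ i (Finsupp.single (b : ι (i+1)) 1)) := by
    rw [Fintype.linearIndependent_iff]
    intro t ht
    set x : ι (i+1) →₀ K := ∑ b : ↥B', t b • Finsupp.single (b : ι (i+1)) 1 with hx
    have hdx : δ i x = 0 := by
      rw [hx, map_sum, ← ht]
      exact Finset.sum_congr rfl fun b _ => map_smul _ _ _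
    have hxk : x ∈ LinearMap.ker (δ i) := hdx
    have hxA : ∀ a ∈ A, x a = 0 := by
      intro a ha
      rw [hx, Finsupp.finset_sum_apply]
      refine Finset.sum_eq_zero fun b _ => ?_
      have hba : (b : ι (i+1)) ≠ a := fun hba => ((hmemB' b).1 b.2) (hba ▸ ha)
      simp [Finsupp.single_apply, hba]
    have hx0 : x = 0 := hP x (hker ▸ hxk) hxA
    intro b
    have hxb := congrArg (fun y : ι (i+1) →₀ K => y (b : ι (i+1))) hx0
    rw [hx] at hxb
    simp only [Finsupp.finset_sum_apply, Finsupp.smul_apply, Finsupp.single_apply,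
      Finsupp.coe_zero, Pi.zero_apply, smul_eq_mul, mul_ite, mul_one, mul_zero,
      Subtype.coe_inj, Finset.sum_ite_eq', Finset.mem_univ, if_true] at hxb
    exact hxb
  -- dimension count
  have hcardA : A.card = Fintype.card ↥B := by
    rw [← Fintype.card_coe]; exact (Fintype.card_congr σ).symm
  have hkerdim : Module.finrank K (LinearMap.ker (δ i)) = Fintype.card ↥B := by
    rw [hker]; exact finrank_span_eq_card hind
  have hrn := LinearMap.finrank_range_add_finrank_ker (δ i)
  have hdim : Module.finrank K (ι (i+1) →₀ K) = Fintype.card (ι (i+1)) :=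
    Module.finrank_finsupp_self K
  have hcardB' : Fintype.card ↥B' = Fintype.card (ι (i+1)) - A.card := by
    rw [Fintype.card_coe, hB', Finset.card_sdiff_of_subset (Finset.subset_univ A), Finset.card_univ]
  have hAle : A.card ≤ Fintype.card (ι (i+1)) := by
    rw [← Finset.card_univ]; exact Finset.card_le_card (Finset.subset_univ A)
  have hspan' : Submodule.span K
      (Set.range fun b : ↥B' => δ i (Finsupp.single (b : ι (i+1)) 1))
      = LinearMap.range (δ i) := by
    apply Submodule.eq_of_le_of_finrank_eq
    · rw [Submodule.span_le]
      rintro _ ⟨b, rfl⟩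
      exact LinearMap.mem_range_self _ _
    · rw [finrank_span_eq_card hind']
      omega
  -- the matching
  refine ⟨B', hind', hspan', mExt i B A σ m, ?_⟩
  have hagree : ∀ w, Cov (i+1) B w → mExt i B A σ m w = m w := by
    rintro ⟨j, x⟩ hw
    rcases hw with hlt | ⟨hEq, hnot⟩
    · exact mExt_other _ (by dsimp at hlt ⊢; omega) (by dsimp at hlt ⊢; omega)
    · dsimp at hEq
      subst hEq
      exact mExt_top_not x hnot
  have hCovUp : ∀ w, Cov (i+1) B w → Cov i B' w := by
    rintro ⟨j, x⟩ hw
    rcases hw with hlt | ⟨hEq, _⟩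
    · exact Or.inl (by dsimp at hlt ⊢; omega)
    · exact Or.inl (by dsimp at hEq ⊢; omega)
  intro v hv
  by_cases hc : Cov (i+1) B v
  · obtain ⟨hmm, hne, hedges, hcov⟩ := hm v hc
    rw [hagree v hc]
    exact ⟨by rw [hagree _ hcov, hmm], hne, hedges, hCovUp _ hcov⟩
  · rcases v with ⟨j, x⟩
    rcases hv with hlt | ⟨hEq, hnotB'⟩
    · dsimp at hlt
      have hj : j = i+1+1 := by
        by_contra hj
        exact hc (Or.inl (by dsimp; omega))
      subst hj
      have hxB : x ∈ B := by
        by_contra hxB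
        exact hc (Or.inr ⟨rfl, hxB⟩)
      rw [mExt_top x hxB]
      refine ⟨?_, ?_, ?_, ?_⟩
      · rw [mExt_mid _ (σ ⟨x, hxB⟩).2]
        have h2 : (⟨(σ ⟨x, hxB⟩ : ι (i+1)), (σ ⟨x, hxB⟩).2⟩ : ↥A) = σ ⟨x, hxB⟩ := rfl
        rw [h2, σ.symm_apply_apply]
      · intro hEq2
        have := congrArg Sigma.fst hEq2
        dsimp at this
        omega
      · exact Or.inl ⟨rfl, hedge ⟨x, hxB⟩⟩
      · exact Or.inr ⟨rfl, fun hmem => ((hmemB' _).1 hmem) (σ ⟨x, hxB⟩).2⟩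
    · dsimp at hEq
      subst hEq
      have hxA : x ∈ A := by
        by_contra hA2
        exact (hnotB' : x ∈ B' → False) ((hmemB' x).2 hA2)
      rw [mExt_mid x hxA]
      refine ⟨?_, ?_, ?_, ?_⟩
      · rw [mExt_top _ (σ.symm ⟨x, hxA⟩).2]
        have h2 : (⟨(σ.symm ⟨x, hxA⟩ : ι (i+1+1)), (σ.symm ⟨x, hxA⟩).2⟩ : ↥B) = σ.symm ⟨x, hxA⟩ := rfl
        rw [h2, σ.apply_symm_apply]
      · intro hEq2
        have := congrArg Sigma.fst hEq2
        dsimp at this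
        omega
      · refine Or.inr ⟨rfl, ?_⟩
        have h3 := hedge (σ.symm ⟨x, hxA⟩)
        rw [σ.apply_symm_apply] at h3
        exact h3
      · exact Or.inl (by dsimp; omega)

lemma base (N : ℤ) (hbdd : ∀ j : ℤ, N < |j| → IsEmpty (ι j)) : Q δ N := by
  have hempty : IsEmpty (ι (N+1)) := by
    apply hbdd
    have := le_abs_self (N+1)
    omega
  refine ⟨∅, ?_, ?_, id, ?_⟩
  · haveI : IsEmpty ↥(∅ : Finset (ι (N+1))) := by
      constructor; rintro ⟨b, hb⟩; exact absurd hb (Finset.notMem_empty b)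
    exact linearIndependent_empty_type
  · have hzero : ∀ x : (ι (N+1) →₀ K), x = 0 := fun x =>
      Finsupp.ext fun a => (hempty.false a).elim
    haveI : IsEmpty ↥(∅ : Finset (ι (N+1))) := by
      constructor; rintro ⟨b, hb⟩; exact absurd hb (Finset.notMem_empty b)
    rw [Set.range_eq_empty, Submodule.span_empty, eq_comm, LinearMap.range_eq_bot]
    exact LinearMap.ext fun x => by rw [hzero x, map_zero]; rfl
  · rintro ⟨j, x⟩ hv
    exfalso
    have hle := le_abs_self j
    rcases hv with hlt | ⟨hEq, _⟩
    · dsimp at hlt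
      exact (hbdd j (by omega)).false x
    · dsimp at hEq
      exact (hbdd j (by omega)).false x

theorem coefficient_graph_of_long_exact_sequence_has_perfect_matching'
    (N : ℤ) (hbdd : ∀ i : ℤ, N < |i| → IsEmpty (ι i))
    (hexact : ∀ i : ℤ, LinearMap.range (δ (i + 1)) = LinearMap.ker (δ i)) :
    ∃ m : (Σ i : ℤ, ι i) → (Σ i : ℤ, ι i),
      Function.Involutive m ∧
        ∀ v, m v ≠ v ∧ (CoeffEdge K ι δ v (m v) ∨ CoeffEdge K ι δ (m v) v) := by
  classical
  have key : ∀ n : ℕ, Q δ (N - n) := by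
    intro n
    induction n with
    | zero =>
      have h0 : (N - ((0:ℕ):ℤ)) = N := by simp
      rw [h0]
      exact base δ N hbdd
    | succ n ih =>
      have h1 : (N - ((n+1:ℕ):ℤ)) + 1 = N - n := by push_cast; ring
      exact step δ hexact _ (by rw [h1]; exact ih)
  obtain ⟨B, _, _, m, hm⟩ := key (2*N+2).toNat
  have hcov : ∀ v : Σ j, ι j, Cov (N - ((2*N+2).toNat : ℤ)) B v := by
    rintro ⟨j, x⟩
    left
    dsimp
    have h1 : |j| ≤ N := not_lt.mp fun hN => (hbdd j hN).false x
    obtain ⟨hL, hR⟩ := abs_le.mp h1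
    have h2 := Int.self_le_toNat (2*N+2)
    omega
  exact ⟨m, fun v => (hm v (hcov v)).1, fun v => ⟨(hm v (hcov v)).2.1, (hm v (hcov v)).2.2.1⟩⟩

end Machinery

/-- Let `⋯ ← V_i ← V_{i+1} ← ⋯` be a bounded long exact sequence of
finite-dimensional vector spaces with fixed bases (modelled as `V i = ι i →₀ K` with
the standard bases, `ι i` finite and empty outside a bounded range).  Then the
coefficient graph (vertex set `⊔_i ι i`, with an edge `v' ← v` for `v ∈ ι (i+1)`,
`v' ∈ ι i` whenever `δ i v` has nonzero `v'`-coefficient) admits a perfect matching: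
an involution `m` without fixed points matching each vertex along an edge of the
graph. -/
theorem coefficient_graph_of_long_exact_sequence_has_perfect_matching
    (K : Type*) [Field K] (ι : ℤ → Type*) [∀ i, Fintype (ι i)]
    (N : ℤ) (hbdd : ∀ i : ℤ, N < |i| → IsEmpty (ι i))
    (δ : ∀ i : ℤ, (ι (i + 1) →₀ K) →ₗ[K] (ι i →₀ K))
    (hexact : ∀ i : ℤ, LinearMap.range (δ (i + 1)) = LinearMap.ker (δ i)) :
    ∃ m : (Σ i : ℤ, ι i) → (Σ i : ℤ, ι i),
      Function.Involutive m ∧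
        ∀ v, m v ≠ v ∧ (CoeffEdge K ι δ v (m v) ∨ CoeffEdge K ι δ (m v) v) := by
  exact coefficient_graph_of_long_exact_sequence_has_perfect_matching' δ N hbdd hexact
end

section
/- In the ring of symmetric polynomials in k variables over ℚ, the ideal generated by the complete homogeneous symmetric polynomials h_{n-k+1}, h_{n-k+2}, …, h_n equals the ideal generated by all h_i with i > n-k. -/
set_option synthInstance.maxHeartbeats 1000000
set_option maxHeartbeats 1000000


open MvPolynomial

/-- The `d`-th complete homogeneous symmetric polynomial in `k` variables over `ℚ`,
as an element of the ring of symmetric polynomials. -/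
noncomputable def hSym (k d : ℕ) : symmetricSubalgebra (Fin k) ℚ :=
  ⟨hsymm (Fin k) ℚ d, (mem_symmetricSubalgebra _).2 (hsymm_isSymmetric _ _ d)⟩

namespace HsymmSpanAux

open Finset

variable {R : Type*} [CommRing R] {σ : Type*} [Fintype σ] [DecidableEq σ]

lemma geom_inv (r : R) :
    ((1 - PowerSeries.C r * PowerSeries.X) * PowerSeries.mk fun d => r ^ d) = 1 := by
  ext n
  rw [sub_mul, one_mul, map_sub, mul_assoc]
  cases n with
  | zero => simp
  | succ n =>
    simp [PowerSeries.coeff_succ_X_mul, pow_succ, mul_comm,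
      PowerSeries.coeff_one]

lemma esymm_cons (a : R) (s : Multiset R) (j : ℕ) :
    (a ::ₘ s).esymm (j + 1) = s.esymm (j + 1) + a * s.esymm j := by
  rw [Multiset.esymm, Multiset.powersetCard_cons, Multiset.map_add,
    Multiset.sum_add, Multiset.map_map]
  simp only [Function.comp_def, Multiset.prod_cons]
  rw [Multiset.esymm, Multiset.esymm, ← Multiset.sum_map_mul_left]

lemma coeff_prod_one_sub (s : Multiset R) (j : ℕ) :
    PowerSeries.coeff j (s.map fun r =>
        1 - PowerSeries.C r * PowerSeries.X).prod = (-1) ^ j * s.esymm j := by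
  induction s using Multiset.induction generalizing j with
  | empty =>
    cases j <;> simp [Multiset.esymm, PowerSeries.coeff_one, Multiset.powersetCard_zero_right]
  | cons a s ih =>
    rw [Multiset.map_cons, Multiset.prod_cons]
    cases j with
    | zero =>
      have h0 := ih 0
      simp only [PowerSeries.coeff_zero_eq_constantCoeff, map_mul, pow_zero, one_mul] at h0 ⊢
      rw [h0]
      simp [Multiset.esymm]
    | succ j =>
      rw [esymm_cons, sub_mul, one_mul, map_sub, mul_assoc, PowerSeries.coeff_C_mul,
        PowerSeries.coeff_succ_X_mul, ih, ih]
      ring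

omit [DecidableEq σ] in
lemma sum_univ_eq_card (l : σ →₀ ℕ) : univ.sum ⇑l = Multiset.card (Finsupp.toMultiset l) := by
  rw [Finsupp.card_toMultiset, Finsupp.sum_fintype]
  · rfl
  · intro _; rfl

lemma coeff_prod_geom (d : ℕ) :
    PowerSeries.coeff d
        (∏ i : σ, PowerSeries.mk fun e => (X i : MvPolynomial σ R) ^ e) =
      hsymm σ R d := by
  rw [PowerSeries.coeff_prod, hsymm]
  refine Finset.sum_bij' (fun l (hl : l ∈ finsuppAntidiag (univ : Finset σ) d) =>
      (⟨Finsupp.toMultiset l, by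
        rw [← sum_univ_eq_card]; exact (Finset.mem_finsuppAntidiag.mp hl).1⟩ : Sym σ d))
      (fun s _ => Multiset.toFinsupp s.1) ?_ ?_ ?_ ?_ ?_
  · intro l hl; exact Finset.mem_univ _
  · intro s hs
    rw [Finset.mem_finsuppAntidiag]
    refine ⟨?_, Finset.subset_univ _⟩
    rw [sum_univ_eq_card (Multiset.toFinsupp s.1), Multiset.toFinsupp_toMultiset]
    exact s.2
  · intro l hl
    ext i
    simp [Multiset.toFinsupp_apply, Finsupp.count_toMultiset]
  · intro s hs
    apply Subtype.ext
    simp [Multiset.toFinsupp_toMultiset]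
  · intro l hl
    simp only [PowerSeries.coeff_mk]
    have h1 : ∀ i, (Finsupp.toMultiset l).count i = l i := fun i => by
      rw [Finsupp.count_toMultiset]
    symm
    calc ((Finsupp.toMultiset l).map X).prod
        = ∏ i ∈ (Finsupp.toMultiset l).toFinset, (X i : MvPolynomial σ R) ^ l i := by
          rw [Finset.prod_multiset_map_count]
          exact Finset.prod_congr rfl fun i _ => by rw [h1]
      _ = ∏ i : σ, (X i : MvPolynomial σ R) ^ l i := by
          refine Finset.prod_subset (Finset.subset_univ _) fun i _ hi => ?_
          have : l i = 0 := by
            rw [← h1 i, Multiset.count_eq_zero]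
            simpa [Multiset.mem_toFinset] using hi
          rw [this, pow_zero]

lemma prod_geom_eq_mk_hsymm :
    (∏ i : σ, PowerSeries.mk fun e => (X i : MvPolynomial σ R) ^ e) =
      PowerSeries.mk (hsymm σ R) := by
  ext d
  rw [PowerSeries.coeff_mk, coeff_prod_geom]

omit [DecidableEq σ] in
lemma esymm_zero_of_card_lt {j : ℕ} (h : Fintype.card σ < j) : esymm σ R j = 0 := by
  rw [esymm]
  rw [Finset.powersetCard_eq_empty.mpr (by simpa using h)]
  simp

lemma sum_antidiag_esymm_hsymm (m : ℕ) (hm : 1 ≤ m) :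
    ∑ p ∈ Finset.HasAntidiagonal.antidiagonal m,
      ((-1) ^ p.1 * esymm σ R p.1) * hsymm σ R p.2 = 0 := by
  set E : PowerSeries (MvPolynomial σ R) :=
    (∏ i : σ, (1 - PowerSeries.C (X i : MvPolynomial σ R) * PowerSeries.X)) with hE
  have hEcoeff : ∀ j, PowerSeries.coeff j E = (-1) ^ j * esymm σ R j := by
    intro j
    have : E = ((univ.val.map (X : σ → MvPolynomial σ R)).map fun r =>
        1 - PowerSeries.C r * PowerSeries.X).prod := by
      rw [hE, Finset.prod_eq_multiset_prod, Multiset.map_map]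
      rfl
    rw [this, coeff_prod_one_sub, esymm_eq_multiset_esymm]
  have hunit : E * PowerSeries.mk (hsymm σ R) = 1 := by
    rw [hE, ← prod_geom_eq_mk_hsymm, ← Finset.prod_mul_distrib]
    rw [Finset.prod_congr rfl fun i _ => geom_inv (X i : MvPolynomial σ R)]
    exact Finset.prod_const_one
  have h0 := congrArg (PowerSeries.coeff m) hunit
  rw [PowerSeries.coeff_mul, PowerSeries.coeff_one, if_neg (by omega)] at h0
  rw [← h0]
  refine Finset.sum_congr rfl fun p _ => ?_
  rw [hEcoeff, PowerSeries.coeff_mk]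

lemma hsymm_rec (m : ℕ) (hm : Fintype.card σ ≤ m) (hm1 : 1 ≤ m) :
    hsymm σ R m = ∑ i ∈ range (Fintype.card σ),
      (-1) ^ i * esymm σ R (i + 1) * hsymm σ R (m - (i + 1)) := by
  have h := sum_antidiag_esymm_hsymm (R := R) (σ := σ) m hm1
  rw [Finset.Nat.sum_antidiagonal_eq_sum_range_succ_mk] at h
  rw [Finset.sum_range_succ'] at h
  simp only [pow_zero, one_mul, esymm_zero, Nat.sub_zero] at h
  have hsplit : ∑ i ∈ range m, ((-1 : MvPolynomial σ R)) ^ (i + 1) * esymm σ R (i + 1)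
      * hsymm σ R (m - (i + 1)) =
      ∑ i ∈ range (Fintype.card σ), ((-1 : MvPolynomial σ R)) ^ (i + 1) * esymm σ R (i + 1)
      * hsymm σ R (m - (i + 1)) := by
    symm
    refine Finset.sum_subset (by intro x hx; simp at hx ⊢; omega) fun i hi hni => ?_
    rw [esymm_zero_of_card_lt (by simp at hni; omega), mul_zero, zero_mul]
  rw [hsplit] at h
  rw [show hsymm σ R m = -∑ i ∈ range (Fintype.card σ),
      ((-1 : MvPolynomial σ R)) ^ (i + 1) * esymm σ R (i + 1) * hsymm σ R (m - (i + 1)) by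
    linear_combination h]
  rw [← Finset.sum_neg_distrib]
  refine Finset.sum_congr rfl fun i _ => ?_
  ring

end HsymmSpanAux

/-- The elementary symmetric polynomials as elements of the symmetric subalgebra. -/
noncomputable def eSymAux (k j : ℕ) : symmetricSubalgebra (Fin k) ℚ :=
  ⟨esymm (Fin k) ℚ j, (mem_symmetricSubalgebra _).2 (esymm_isSymmetric _ _ j)⟩

lemma hSym_rec (k m : ℕ) (hm : k ≤ m) (hm1 : 1 ≤ m) :
    hSym k m = ∑ i ∈ Finset.range k,
      (-1) ^ i * eSymAux k (i + 1) * hSym k (m - (i + 1)) := by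
  apply Subtype.ext
  push_cast [hSym, eSymAux]
  have := HsymmSpanAux.hsymm_rec (R := ℚ) (σ := Fin k) m (by simpa using hm) hm1
  simpa using this


/-- In the ring of symmetric polynomials in `k` variables over `ℚ`
(`1 ≤ k ≤ n`), the ideal generated by the complete homogeneous symmetric polynomials
`h_{n−k+1}, …, h_n` equals the ideal generated by all `h_i` with `i > n − k`. -/
theorem ideal_span_hsymm_range_eq_span_hsymm_gt
    (k n : ℕ) (hk : 1 ≤ k) (hkn : k ≤ n) :
    Ideal.span {x : symmetricSubalgebra (Fin k) ℚ |
        ∃ d : ℕ, n - k + 1 ≤ d ∧ d ≤ n ∧ x = hSym k d} =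
      Ideal.span {x : symmetricSubalgebra (Fin k) ℚ |
        ∃ d : ℕ, n - k < d ∧ x = hSym k d} := by
  apply le_antisymm
  · apply Ideal.span_mono
    rintro x ⟨d, h1, h2, rfl⟩
    exact ⟨d, by omega, rfl⟩
  · rw [Ideal.span_le]
    rintro x ⟨d, hd, rfl⟩
    have key : ∀ d : ℕ, n - k < d → hSym k d ∈ Ideal.span {x : symmetricSubalgebra (Fin k) ℚ |
        ∃ d : ℕ, n - k + 1 ≤ d ∧ d ≤ n ∧ x = hSym k d} := by
      intro d
      induction d using Nat.strong_induction_on with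
      | _ d ih =>
        intro hd
        by_cases hdn : d ≤ n
        · exact Ideal.subset_span ⟨d, by omega, hdn, rfl⟩
        · rw [hSym_rec k d (by omega) (by omega)]
          refine Ideal.sum_mem _ fun i hi => ?_
          rw [Finset.mem_range] at hi
          exact Ideal.mul_mem_left _ _ (ih (d - (i + 1)) (by omega) (by omega))
    exact key d hd
end

section
/- Let λ and μ be partitions with μ ⊆ λ, both single rows: λ = (p) and μ = (s) with s ≤ p. Then the change-of-basis coefficient b_{λμ} defined by s_λ(1−t_1,…,1−t_k) = ∑_μ b_{λμ} s_μ(t_1,…,t_k) equals (−1)^s · C(k+p−1, k+s−1), i.e., h_p(1−t) = ∑_{s=0}^{p} (−1)^s C(k+p−1, k+s−1) h_s(t). -/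
open Finset

theorem aux_W (c d : ℕ) (hcd : c ≤ d) :
    ∀ (p m : ℕ), ∑ ij ∈ Finset.HasAntidiagonal.antidiagonal p,
      (ij.1.choose m) * ((ij.2 + c).choose d) = (p + c + 1).choose (m + d + 1) := by
  intro p
  induction p with
  | zero =>
    intro m
    rcases m with _ | m'
    · simp only [Finset.Nat.antidiagonal_zero, Finset.sum_singleton, Nat.choose_zero_right,
        one_mul, zero_add]
      rcases eq_or_lt_of_le hcd with rfl | h
      · simp
      · rw [Nat.choose_eq_zero_of_lt h, Nat.choose_eq_zero_of_lt (by omega)]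
    · simp only [Finset.Nat.antidiagonal_zero, Finset.sum_singleton, zero_add]
      rw [Nat.choose_eq_zero_of_lt (by omega), zero_mul,
        Nat.choose_eq_zero_of_lt (by omega)]
  | succ p ih =>
    intro m
    rw [Finset.Nat.sum_antidiagonal_succ]
    rcases m with _ | m'
    · have h0 : ∑ ij ∈ Finset.HasAntidiagonal.antidiagonal p, ((ij.1 + 1).choose 0) * ((ij.2 + c).choose d)
          = (p + c + 1).choose (0 + d + 1) := by
        rw [← ih 0]
        exact Finset.sum_congr rfl fun ij _ => by simp
      rw [h0]
      have hP := Nat.choose_succ_succ (p + c + 1) d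
      simp only [Nat.succ_eq_add_one] at hP
      have e1 : p + 1 + c + 1 = p + c + 1 + 1 := by omega
      have e0 : p + 1 + c = p + c + 1 := by omega
      rw [e1, e0]
      simp only [Nat.choose_zero_right, one_mul, zero_add] at *
      omega
    · rw [Nat.choose_eq_zero_of_lt (by omega), zero_mul, zero_add]
      have expand : ∀ ij ∈ Finset.HasAntidiagonal.antidiagonal p,
          ((ij.1 + 1).choose (m' + 1)) * ((ij.2 + c).choose d)
          = (ij.1.choose m') * ((ij.2 + c).choose d)
            + (ij.1.choose (m'+1)) * ((ij.2 + c).choose d) := by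
        intro ij _
        rw [Nat.choose_succ_succ, add_mul]
      rw [Finset.sum_congr rfl expand, Finset.sum_add_distrib, ih m', ih (m'+1)]
      have hP := Nat.choose_succ_succ (p + c + 1) (m' + d + 1)
      simp only [Nat.succ_eq_add_one] at hP
      have e1 : p + 1 + c + 1 = p + c + 1 + 1 := by omega
      have e2 : m' + 1 + d + 1 = m' + d + 1 + 1 := by omega
      rw [e1, e2]
      omega

theorem aux_V {ι : Type*} [DecidableEq ι] (β : ι → ℕ) :
    ∀ (s : Finset ι), s.Nonempty → ∀ (p : ℕ),
      ∑ f ∈ s.piAntidiag p, ∏ i ∈ s, (f i).choose (β i)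
        = (p + (s.card - 1)).choose ((∑ i ∈ s, β i) + (s.card - 1)) := by
  intro s hs
  induction hs using Finset.Nonempty.cons_induction with
  | singleton a =>
    intro p
    have hset : Finset.piAntidiag ({a} : Finset ι) p
        = {fun j => if j = a then p else 0} := by
      ext f
      simp only [mem_piAntidiag, sum_singleton, mem_singleton, ne_eq]
      constructor
      · rintro ⟨rfl, hf⟩
        funext j
        by_cases hj : j = a
        · simp [hj]
        · simp only [hj, if_false]
          by_contra h
          exact hj (by simpa using hf j h)
      · rintro rfl
        simp
    rw [hset, Finset.sum_singleton, Finset.prod_singleton]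
    simp
  | cons a t hat htne ih =>
    intro p
    rw [Finset.piAntidiag_cons hat p, Finset.sum_disjiUnion]
    have hstep : ∀ ab ∈ Finset.HasAntidiagonal.antidiagonal p,
        (∑ f ∈ (Finset.piAntidiag t ab.2).map
            (addRightEmbedding fun j => if j = a then ab.1 else 0),
          ∏ i ∈ Finset.cons a t hat, (f i).choose (β i))
        = (ab.1.choose (β a)) *
            ((ab.2 + (t.card - 1)).choose ((∑ i ∈ t, β i) + (t.card - 1))) := by
      intro ab _
      rw [Finset.sum_map, ← ih ab.2, Finset.mul_sum]
      refine Finset.sum_congr rfl fun g hg => ?_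
      simp only [addRightEmbedding_apply, Finset.prod_cons, Pi.add_apply]
      have hga : g a = 0 := by
        rw [Finset.mem_piAntidiag] at hg
        by_contra h
        exact hat (hg.2 a h)
      rw [hga, if_pos trivial, zero_add]
      congr 1
      refine Finset.prod_congr rfl fun i hi => ?_
      rw [if_neg (fun h : i = a => hat (h ▸ hi)), add_zero]
    rw [Finset.sum_congr rfl hstep,
      aux_W (t.card - 1) ((∑ i ∈ t, β i) + (t.card - 1)) (by omega) p (β a)]
    have ht1 : 1 ≤ t.card := Finset.card_pos.mpr htne
    rw [Finset.sum_cons, Finset.card_cons]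
    congr 1 <;> omega

open MvPolynomial

theorem hsymm_eq_sum_piAntidiag (k n : ℕ) :
    hsymm (Fin k) ℚ n
      = ∑ f ∈ Finset.piAntidiag (univ : Finset (Fin k)) n, ∏ i, (X i : MvPolynomial (Fin k) ℚ) ^ f i := by
  rw [← Finset.map_sym_eq_piAntidiag (univ : Finset (Fin k)) n, Finset.sum_map,
    Finset.sym_univ, hsymm]
  refine Finset.sum_congr rfl fun m _ => ?_
  show _ = ∏ i, X i ^ Multiset.count i (m : Multiset (Fin k))
  refine (Finset.prod_multiset_map_count _ X).trans
    (Finset.prod_subset (Finset.subset_univ _) fun i _ hi => ?_)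
  rw [Multiset.count_eq_zero_of_notMem (by simpa using hi), pow_zero]

theorem one_sub_pow_eq {R : Type*} [CommRing R] (x : R) {n p : ℕ} (h : n ≤ p) :
    (1 - x) ^ n = ∑ b ∈ Finset.range (p + 1), (n.choose b : R) * ((-1) ^ b * x ^ b) := by
  have h1 : (1 - x) ^ n = ∑ b ∈ Finset.range (n + 1), (n.choose b : R) * ((-1) ^ b * x ^ b) := by
    rw [sub_eq_add_neg, add_comm, add_pow]
    refine Finset.sum_congr rfl fun b _ => ?_
    rw [neg_pow]
    ring
  rw [h1]
  refine Finset.sum_subset (by intro b hb; simp at hb ⊢; omega) fun b _ hb => ?_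
  rw [Nat.choose_eq_zero_of_lt (by simp at hb ⊢; omega)]
  simp


/-- For single-row partitions, the change of basis `t ↦ 1 − t` on
complete homogeneous symmetric polynomials in `k` variables is given by
`h_p(1−t) = ∑_{s=0}^{p} (−1)^s C(k+p−1, k+s−1) h_s(t)`. -/
theorem hsymm_one_sub_eq_alternating_binomial_sum
    (k p : ℕ) (hk : 1 ≤ k) :
    aeval (fun i : Fin k => (1 : MvPolynomial (Fin k) ℚ) - X i) (hsymm (Fin k) ℚ p) =
      ∑ s ∈ Finset.range (p + 1),
        ((-1 : ℚ) ^ s * ((k + p - 1).choose (k + s - 1) : ℚ)) • hsymm (Fin k) ℚ s := by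
  classical
  haveI : NeZero k := ⟨by omega⟩
  set A := MvPolynomial (Fin k) ℚ
  set N : ℕ → ℕ := fun s => (p + (k - 1)).choose (s + (k - 1)) with hN
  set g : (Fin k → ℕ) → A := fun β =>
    (N (∑ i, β i) : A) * ((-1) ^ (∑ i, β i) * ∏ i, X i ^ β i) with hg
  have huniv : (Finset.univ : Finset (Fin k)).Nonempty := Finset.univ_nonempty
  have hcard : (Finset.univ : Finset (Fin k)).card = k := by simp
  -- LHS computation
  have hLHS : aeval (fun i : Fin k => (1 : A) - X i) (hsymm (Fin k) ℚ p)
      = ∑ β ∈ Fintype.piFinset (fun _ : Fin k => Finset.range (p + 1)), g β := by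
    rw [hsymm_eq_sum_piAntidiag, map_sum]
    simp only [map_prod, map_pow, aeval_X]
    have step1 : ∀ α ∈ Finset.piAntidiag (Finset.univ : Finset (Fin k)) p,
        (∏ i, ((1 : A) - X i) ^ α i)
        = ∑ β ∈ Fintype.piFinset (fun _ : Fin k => Finset.range (p + 1)),
            ∏ i, ((α i).choose (β i) : A) * ((-1) ^ (β i) * X i ^ (β i)) := by
      intro α hα
      rw [Finset.mem_piAntidiag] at hα
      have hle : ∀ i, α i ≤ p := by
        intro i
        rw [← hα.1]
        exact Finset.single_le_sum (fun j _ => Nat.zero_le _) (Finset.mem_univ i)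
      rw [Finset.prod_congr rfl fun i (_ : i ∈ Finset.univ) => one_sub_pow_eq (X i) (hle i),
        Finset.prod_univ_sum]
    rw [Finset.sum_congr rfl step1, Finset.sum_comm]
    refine Finset.sum_congr rfl fun β _ => ?_
    have inner : ∀ α ∈ Finset.piAntidiag (Finset.univ : Finset (Fin k)) p,
        (∏ i, ((α i).choose (β i) : A) * ((-1) ^ (β i) * X i ^ (β i)))
        = ((∏ i, (α i).choose (β i) : ℕ) : A) * ((-1) ^ (∑ i, β i) * ∏ i, X i ^ β i) := by
      intro α _
      rw [Finset.prod_mul_distrib, Finset.prod_mul_distrib, Nat.cast_prod,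
        Finset.prod_pow_eq_pow_sum]
    rw [Finset.sum_congr rfl inner, ← Finset.sum_mul, ← Nat.cast_sum,
      aux_V β Finset.univ huniv p, hcard, hg, hN]
  rw [hLHS]
  -- RHS computation
  have hRHS : ∀ s ∈ Finset.range (p + 1),
      ((-1 : ℚ) ^ s * ((k + p - 1).choose (k + s - 1) : ℚ)) • hsymm (Fin k) ℚ s
      = ∑ β ∈ Finset.piAntidiag (Finset.univ : Finset (Fin k)) s, g β := by
    intro s hs
    rw [hsymm_eq_sum_piAntidiag, Finset.smul_sum]
    refine Finset.sum_congr rfl fun β hβ => ?_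
    rw [Finset.mem_piAntidiag] at hβ
    have hsum : ∑ i, β i = s := hβ.1
    rw [hg]
    simp only [hsum]
    rw [Algebra.smul_def, map_mul, map_pow, map_neg, map_one, map_natCast]
    have : (k + p - 1) = p + (k - 1) := by omega
    rw [this, show (k + s - 1) = s + (k - 1) by omega, hN]
    ring
  rw [Finset.sum_congr rfl hRHS]
  -- reindexing
  have hfiber : ∀ s ∈ Finset.range (p + 1),
      ((Fintype.piFinset (fun _ : Fin k => Finset.range (p + 1))).filter
          (fun β => (∑ i, β i) ≤ p)).filter (fun β => (∑ i, β i) = s)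
      = Finset.piAntidiag (Finset.univ : Finset (Fin k)) s := by
    intro s hs
    rw [Finset.mem_range] at hs
    ext β
    simp only [Finset.mem_piAntidiag, Finset.mem_filter, Fintype.mem_piFinset,
      Finset.mem_range, Finset.mem_univ, implies_true, and_true, ne_eq]
    have hβs : ∀ i, β i ≤ ∑ j, β j :=
      fun i => Finset.single_le_sum (f := β) (fun j _ => Nat.zero_le _) (Finset.mem_univ i)
    have he : (Finset.univ : Finset (Fin k)).sum β = ∑ j, β j := rfl
    constructor
    · rintro ⟨⟨-, -⟩, h2⟩
      omega
    · intro h1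
      have h2 := fun i => hβs i
      refine ⟨⟨fun i => ?_, by omega⟩, by omega⟩
      have := h2 i
      omega
  have hzero : ∑ β ∈ (Fintype.piFinset (fun _ : Fin k => Finset.range (p + 1))).filter
      (fun β => ¬ (∑ i, β i ≤ p)), g β = 0 := by
    refine Finset.sum_eq_zero fun β hβ => ?_
    rw [Finset.mem_filter] at hβ
    rw [hg]
    simp only
    rw [hN]
    simp only
    rw [Nat.choose_eq_zero_of_lt (by omega), Nat.cast_zero, zero_mul]
  calc ∑ β ∈ Fintype.piFinset (fun _ : Fin k => Finset.range (p + 1)), g β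
      = (∑ β ∈ (Fintype.piFinset (fun _ : Fin k => Finset.range (p + 1))).filter
            (fun β => (∑ i, β i) ≤ p), g β)
        + ∑ β ∈ (Fintype.piFinset (fun _ : Fin k => Finset.range (p + 1))).filter
            (fun β => ¬ ((∑ i, β i) ≤ p)), g β :=
        (Finset.sum_filter_add_sum_filter_not _ _ _).symm
    _ = ∑ β ∈ (Fintype.piFinset (fun _ : Fin k => Finset.range (p + 1))).filter
            (fun β => (∑ i, β i) ≤ p), g β := by rw [hzero, add_zero]
    _ = ∑ s ∈ Finset.range (p + 1),
          ∑ β ∈ ((Fintype.piFinset (fun _ : Fin k => Finset.range (p + 1))).filter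
            (fun β => (∑ i, β i) ≤ p)).filter (fun β => (∑ i, β i) = s), g β :=
        (Finset.sum_fiberwise_of_maps_to
          (fun β hβ => by rw [Finset.mem_filter] at hβ; rw [Finset.mem_range]; omega) g).symm
    _ = ∑ s ∈ Finset.range (p + 1),
          ∑ β ∈ Finset.piAntidiag (Finset.univ : Finset (Fin k)) s, g β :=
        Finset.sum_congr rfl fun s hs => by rw [hfiber s hs]
end

section
/- Let R = ℂ[x_{ij} : 1 ≤ i,j ≤ k] and let F_• : 0 → F_N → ⋯ → F_0 → 0 be a bounded complex of free R-modules with a chosen homogeneous basis, such that each basis element carries a label λ from a poset P, each differential sends a basis element labeled λ into the R-span of basis elements with strictly smaller labels, and such that F_• ⊗_R Frac(R) is exact. Then the graph with one vertex per basis element and an edge from each basis element x of F_{i+1} to each basis element y of F_i whenever label(y) < label(x) has a perfect matching. -/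
open LinearMap Submodule

lemma existsPermNeZero {K : Type} [Field K] {n : Type} [Fintype n] [DecidableEq n]
    {M : Matrix n n K} (h : M.det ≠ 0) : ∃ σ : Equiv.Perm n, ∀ i, M (σ i) i ≠ 0 := by
  by_contra hc
  push_neg at hc
  apply h
  rw [Matrix.det_apply]
  refine Finset.sum_eq_zero fun σ _ => ?_
  obtain ⟨i, hi⟩ := hc σ
  rw [Finset.prod_eq_zero (f := fun j => M (σ j) j) (Finset.mem_univ i) hi, smul_zero]

/-- The index types of the reduced complex. -/
def auxι (ι : ℕ → Type) (C : Type) : ℕ → Type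
  | 0 => C
  | (j+1) => ι (j+2)

def auxFin (ι : ℕ → Type) (C : Type) (inst : ∀ i, Fintype (ι i)) (instC : Fintype C) :
    ∀ i, Fintype (auxι ι C i)
  | 0 => instC
  | (j+1) => inst (j+2)

def auxDec (ι : ℕ → Type) (C : Type) (dec : ∀ i, DecidableEq (ι i)) (decC : DecidableEq C) :
    ∀ i, DecidableEq (auxι ι C i)
  | 0 => decC
  | (j+1) => dec (j+2)

/-- The differentials of the reduced complex. -/
def auxf {K : Type} [Field K] (ι : ℕ → Type) (C : Type)
    (f : ∀ i, (ι (i+1) → K) →ₗ[K] (ι i → K)) (π : (ι 1 → K) →ₗ[K] (C → K)) :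
    ∀ i, (auxι ι C (i+1) → K) →ₗ[K] (auxι ι C i → K)
  | 0 => π.comp (f 1)
  | (j+1) => f (j+2)

/-- Embedding of the vertices of the reduced complex into the original ones. -/
def auxEmb (ι : ℕ → Type) (C : Type) (val : C → ι 1) : (Σ i, auxι ι C i) → Σ i, ι i
  | ⟨0, z⟩ => ⟨1, val z⟩
  | ⟨(j+1), z⟩ => ⟨j+2, z⟩

open Classical in
/-- The assembled matching. -/
noncomputable def auxM (ι : ℕ → Type) (C : Type) (val : C → ι 1) (g : ι 0 → ι 1)
    (mk : ∀ x : ι 1, ¬(∃ y, g y = x) → C)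
    (m' : (Σ i, auxι ι C i) → Σ i, auxι ι C i) : (Σ i, ι i) → Σ i, ι i
  | ⟨0, y⟩ => ⟨1, g y⟩
  | ⟨1, x⟩ => if h : ∃ y, g y = x then ⟨0, h.choose⟩ else auxEmb ι C val (m' ⟨0, mk x h⟩)
  | ⟨(j+2), z⟩ => auxEmb ι C val (m' ⟨j+1, z⟩)

section auxEq
variable (ι : ℕ → Type) (C : Type) (val : C → ι 1) (g : ι 0 → ι 1)
    (mk : ∀ x : ι 1, ¬(∃ y, g y = x) → C)
    (m' : (Σ i, auxι ι C i) → Σ i, auxι ι C i)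

lemma auxEmb_zero (z : C) : auxEmb ι C val ⟨0, z⟩ = ⟨1, val z⟩ := rfl

lemma auxEmb_succ (j : ℕ) (z : auxι ι C (j+1)) : auxEmb ι C val ⟨j+1, z⟩ = ⟨j+2, z⟩ := rfl

open Classical in
lemma auxM_zero (y : ι 0) : auxM ι C val g mk m' ⟨0, y⟩ = ⟨1, g y⟩ := rfl

open Classical in
lemma auxM_one (x : ι 1) : auxM ι C val g mk m' ⟨1, x⟩ =
    if h : ∃ y, g y = x then ⟨0, h.choose⟩ else auxEmb ι C val (m' ⟨0, mk x h⟩) := rfl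

open Classical in
lemma auxM_two (j : ℕ) (z : ι (j+2)) : auxM ι C val g mk m' ⟨j+2, z⟩ =
    auxEmb ι C val (m' ⟨j+1, z⟩) := rfl

end auxEq

theorem fieldKey {K : Type} [Field K] (N : ℕ) :
    ∀ (ι : ℕ → Type) [inst : ∀ i, Fintype (ι i)] [dec : ∀ i, DecidableEq (ι i)]
      (f : ∀ i, (ι (i+1) → K) →ₗ[K] (ι i → K)),
      (∀ i, N < i → IsEmpty (ι i)) →
      LinearMap.range (f 0) = ⊤ →
      (∀ i, LinearMap.range (f (i+1)) = LinearMap.ker (f i)) →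
      ∃ m : (Σ i, ι i) → (Σ i, ι i), Function.Involutive m ∧
        ∀ v : Σ i, ι i,
          (∃ (j : ℕ) (x : ι (j+1)) (y : ι j), v = ⟨j+1, x⟩ ∧ m v = ⟨j, y⟩ ∧
            f j (Pi.single x 1) y ≠ 0) ∨
          (∃ (j : ℕ) (x : ι (j+1)) (y : ι j), v = ⟨j, y⟩ ∧ m v = ⟨j+1, x⟩ ∧
            f j (Pi.single x 1) y ≠ 0) := by
  induction N with
  | zero =>
    intro ι inst dec f hbdd hsurj hexact
    haveI h1 : IsEmpty (ι 1) := hbdd 1 Nat.one_pos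
    have h0 : IsEmpty (ι 0) := by
      by_contra h
      rw [not_isEmpty_iff] at h
      obtain ⟨y⟩ := h
      have hmem : (Pi.single y 1 : ι 0 → K) ∈ LinearMap.range (f 0) := hsurj ▸ trivial
      obtain ⟨u, hu⟩ := hmem
      rw [Subsingleton.elim u 0, map_zero] at hu
      have := congrFun hu y
      simp [Pi.single_eq_same] at this
    haveI : IsEmpty (Σ i, ι i) := by
      constructor
      rintro ⟨i, z⟩
      match i, z with
      | 0, z => exact h0.false z
      | (j+1), z => exact (hbdd (j+1) (Nat.succ_pos j)).false z
    exact ⟨fun v => v, fun v => rfl, fun v => (IsEmpty.false v).elim⟩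
  | succ N IH =>
    intro ι inst dec f hbdd hsurj hexact
    classical
    -- the columns of the matrix of f 0
    set c : ι 1 → (ι 0 → K) := fun x => f 0 (Pi.single x 1) with hc
    have hspan : Submodule.span K (Set.range c) = ⊤ := by
      rw [eq_top_iff]
      rintro w -
      have hw : w ∈ LinearMap.range (f 0) := hsurj ▸ trivial
      obtain ⟨u, rfl⟩ := hw
      have hu : u = ∑ x : ι 1, u x • (Pi.single x 1 : ι 1 → K) := by
        funext z
        rw [Finset.sum_apply]
        simp [Pi.single_apply]
      rw [hu, map_sum]
      refine Submodule.sum_mem _ fun x _ => ?_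
      rw [map_smul]
      exact Submodule.smul_mem _ _ (Submodule.subset_span ⟨x, rfl⟩)
    obtain ⟨b, hbsub, hbspan, hbli⟩ := exists_linearIndependent K (Set.range c)
    rw [hspan] at hbspan
    haveI : Fintype b := hbli.setFinite.fintype
    let B : Module.Basis b K (ι 0 → K) := Module.Basis.mk hbli (by rw [Subtype.range_coe]; exact hbspan.ge)
    have hcard : Fintype.card (ι 0) = Fintype.card b := by
      rw [← Module.finrank_fintype_fun_eq_card K, Module.finrank_eq_card_basis B]
    let e0 : ι 0 ≃ b := Fintype.equivOfCardEq hcard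
    have hpre : ∀ w : b, ∃ x : ι 1, c x = w := fun w => hbsub w.2
    let p : b → ι 1 := fun w => (hpre w).choose
    have hp : ∀ w, c (p w) = w := fun w => (hpre w).choose_spec
    have hpinj : Function.Injective p := fun w w' h => by
      apply Subtype.ext
      rw [← hp w, ← hp w', h]
    let B0 : Module.Basis (ι 0) K (ι 0 → K) := B.reindex e0.symm
    have hB0 : ∀ y, B0 y = c (p (e0 y)) := by
      intro y
      rw [show B0 y = B (e0 y) from by simp [B0], hp]
      simp [B, Module.Basis.mk_apply]
    -- an invertible square submatrix
    let Q : Matrix (ι 0) (ι 0) K := Matrix.of fun z y => c (p (e0 y)) z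
    have hQ : Q.det ≠ 0 := by
      let E0 : (ι 0 → K) ≃ₗ[K] (ι 0 → K) := (Pi.basisFun K (ι 0)).equiv B0 (Equiv.refl _)
      have hE : Matrix.toLin' Q = (E0 : (ι 0 → K) →ₗ[K] (ι 0 → K)) := by
        apply (Pi.basisFun K (ι 0)).ext
        intro y
        have h1 : (E0 : (ι 0 → K) →ₗ[K] (ι 0 → K)) ((Pi.basisFun K (ι 0)) y)
            = B0 (Equiv.refl _ y) := (Pi.basisFun K (ι 0)).equiv_apply y B0 _
        rw [h1, Pi.basisFun_apply, Matrix.toLin'_apply, Matrix.mulVec_single]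
        funext z
        rw [hB0]
        simp [Q]
      have h2 := (LinearEquiv.isUnit_det' E0).ne_zero
      rw [← hE, LinearMap.det_toLin'] at h2
      exact h2
    obtain ⟨σ, hσ⟩ := existsPermNeZero hQ
    -- the matched injection g : ι 0 → ι 1
    set g : ι 0 → ι 1 := fun y => p (e0 (σ.symm y)) with hgdef
    have hg : ∀ y, c (g y) y ≠ 0 := by
      intro y
      have := hσ (σ.symm y)
      rwa [show σ (σ.symm y) = y from σ.apply_symm_apply y] at this
    have hginj : Function.Injective g :=
      hpinj.comp (e0.injective.comp σ.symm.injective)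
    let C := {x : ι 1 // ¬ ∃ y, g y = x}
    let π : (ι 1 → K) →ₗ[K] (C → K) := LinearMap.funLeft K K Subtype.val
    let ψ : (ι 0 → K) →ₗ[K] (ι 1 → K) :=
      { toFun := fun w x => if h : ∃ y, g y = x then w h.choose else 0
        map_add' := by
          intro w w'
          funext x
          by_cases h : ∃ y, g y = x <;> simp [h]
        map_smul' := by
          intro a w
          funext x
          by_cases h : ∃ y, g y = x <;> simp [h] }
    have hψsingle : ∀ y, ψ (Pi.single y 1) = Pi.single (g y) 1 := by
      intro y
      funext x
      show (if h : ∃ y', g y' = x then (Pi.single y 1 : ι 0 → K) h.choose else 0)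
        = (Pi.single (g y) 1 : ι 1 → K) x
      by_cases h : ∃ y', g y' = x
      · rw [dif_pos h]
        by_cases hx : x = g y
        · have hcy : h.choose = y := hginj (by rw [h.choose_spec, hx])
          rw [hcy, hx]
          simp
        · have hcy : h.choose ≠ y := fun hh => hx (by rw [← h.choose_spec, hh])
          rw [Pi.single_eq_of_ne hcy, Pi.single_eq_of_ne (fun hh => hx hh)]
      · rw [dif_neg h, Pi.single_eq_of_ne]
        intro hh
        exact h ⟨y, hh.symm⟩
    have hπψ : ∀ w, π (ψ w) = 0 := by
      intro w
      funext x
      show (if h : ∃ y, g y = x.val then w h.choose else 0) = 0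
      rw [dif_neg x.2]
    have hψker : ∀ u : ι 1 → K, π u = 0 → u = ψ (fun y => u (g y)) := by
      intro u hu
      funext x
      show u x = if h' : ∃ y, g y = x then u (g h'.choose) else 0
      by_cases h : ∃ y, g y = x
      · rw [dif_pos h, h.choose_spec]
      · rw [dif_neg h]
        exact congrFun hu ⟨x, h⟩
    -- f 0 ∘ ψ is a linear equivalence
    let B0' : Module.Basis (ι 0) K (ι 0 → K) := B0.reindex σ
    let E : (ι 0 → K) ≃ₗ[K] (ι 0 → K) := (Pi.basisFun K (ι 0)).equiv B0' (Equiv.refl _)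
    have hcomp : (f 0).comp ψ = (E : (ι 0 → K) →ₗ[K] (ι 0 → K)) := by
      apply (Pi.basisFun K (ι 0)).ext
      intro y
      have h1 : (E : (ι 0 → K) →ₗ[K] (ι 0 → K)) ((Pi.basisFun K (ι 0)) y)
          = B0' (Equiv.refl _ y) := (Pi.basisFun K (ι 0)).equiv_apply y B0' _
      rw [h1, Pi.basisFun_apply, LinearMap.comp_apply, hψsingle]
      show c (g y) = B0' (Equiv.refl _ y)
      rw [show B0' (Equiv.refl _ y) = B0 (σ.symm y) from B0.reindex_apply σ y, hB0]
    have hEψ : ∀ w, f 0 (ψ w) = E w := fun w => by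
      rw [← LinearMap.comp_apply, hcomp]
      rfl
    have hker : ∀ w, f 0 (ψ w) = 0 → w = 0 := by
      intro w h
      rw [hEψ] at h
      exact E.map_eq_zero_iff.mp h
    -- the smaller complex
    let f' := auxf ι C f π
    have hbdd' : ∀ i, N < i → IsEmpty (auxι ι C i) := fun i => by
      match i with
      | 0 => exact fun h => absurd h (Nat.not_lt_zero N)
      | (j+1) => exact fun h => hbdd (j+2) (by omega)
    have hsurj' : LinearMap.range (f' 0) = ⊤ := by
      rw [eq_top_iff]
      rintro w -
      set wt : ι 1 → K := fun x => if h : ∃ y, g y = x then 0 else w ⟨x, h⟩ with hwt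
      set u : ι 1 → K := wt - ψ (E.symm (f 0 wt)) with huu
      have hu0 : f 0 u = 0 := by
        rw [huu, map_sub, hEψ, LinearEquiv.apply_symm_apply, sub_self]
      have hu : u ∈ LinearMap.ker (f 0) := hu0
      rw [← hexact 0] at hu
      obtain ⟨v, hv⟩ := hu
      refine ⟨v, ?_⟩
      show π (f 1 v) = w
      rw [hv, huu, map_sub, hπψ, sub_zero]
      funext x
      show wt x.val = w x
      rw [hwt]
      simp only
      rw [dif_neg x.2]
    have hexact' : ∀ i, LinearMap.range (f' (i+1)) = LinearMap.ker (f' i) := by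
      intro i
      match i with
      | 0 =>
        show LinearMap.range (f 2) = LinearMap.ker (π.comp (f 1))
        apply le_antisymm
        · rintro _ ⟨v, rfl⟩
          have hm : f 2 v ∈ LinearMap.ker (f 1) := by
            rw [← hexact 1]; exact ⟨v, rfl⟩
          rw [LinearMap.mem_ker] at hm ⊢
          rw [LinearMap.comp_apply, hm, map_zero]
        · rintro v hv
          rw [LinearMap.mem_ker, LinearMap.comp_apply] at hv
          have h1 : f 1 v = ψ (fun y => f 1 v (g y)) := hψker _ hv
          have h2 : f 0 (f 1 v) = 0 := by
            have hm : f 1 v ∈ LinearMap.ker (f 0) := by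
              rw [← hexact 0]; exact ⟨v, rfl⟩
            exact hm
          rw [h1] at h2
          have h3 : (fun y => f 1 v (g y)) = 0 := hker _ h2
          rw [h3, map_zero] at h1
          have hm : v ∈ LinearMap.ker (f 1) := h1
          rw [← hexact 1] at hm
          exact hm
      | (j+1) =>
        show LinearMap.range (f (j+3)) = LinearMap.ker (f (j+2))
        exact hexact (j+2)
    obtain ⟨m', hm'inv, hm'edge⟩ :=
      @IH (auxι ι C) (auxFin ι C inst inferInstance) (auxDec ι C dec inferInstance)
        f' hbdd' hsurj' hexact'
    -- assemble the matching
    let emb := auxEmb ι C Subtype.val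
    let m := auxM ι C Subtype.val g (fun x h => ⟨x, h⟩) m'
    have he0 : ∀ z : C, emb ⟨0, z⟩ = ⟨1, z.val⟩ := fun z => rfl
    have he1 : ∀ (j : ℕ) (z : auxι ι C (j+1)), emb ⟨j+1, z⟩ = ⟨j+2, z⟩ := fun j z => rfl
    have hm0 : ∀ y : ι 0, m ⟨0, y⟩ = ⟨1, g y⟩ := fun y =>
      auxM_zero ι C Subtype.val g (fun x h => ⟨x, h⟩) m' y
    have hm1 : ∀ x : ι 1, m ⟨1, x⟩ =
        @dite _ (∃ y, g y = x) (Classical.propDecidable _)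
          (fun h => (⟨0, h.choose⟩ : Σ i, ι i)) (fun h => emb (m' ⟨0, ⟨x, h⟩⟩)) := fun x =>
      auxM_one ι C Subtype.val g (fun x h => ⟨x, h⟩) m' x
    have hm2 : ∀ (j : ℕ) (z : ι (j+2)), m ⟨j+2, z⟩ = emb (m' ⟨j+1, z⟩) := fun j z =>
      auxM_two ι C Subtype.val g (fun x h => ⟨x, h⟩) m' j z
    have hcomm : ∀ w, m (emb w) = emb (m' w) := by
      rintro ⟨i, z⟩
      match i, z with
      | 0, z =>
        rw [he0 z, hm1, dif_neg z.2]
        exact congrArg (fun t : C => emb (m' ⟨0, t⟩)) (Subtype.ext rfl)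
      | (j+1), z =>
        rw [he1 j z, hm2 j z]
    refine ⟨m, ?_, ?_⟩
    · rintro ⟨i, z⟩
      match i, z with
      | 0, y =>
        rw [hm0, hm1, dif_pos ⟨y, rfl⟩]
        exact congrArg (fun t => (⟨0, t⟩ : Σ i, ι i))
          (hginj (⟨y, rfl⟩ : ∃ y', g y' = g y).choose_spec)
      | 1, x =>
        by_cases h : ∃ y, g y = x
        · rw [hm1, dif_pos h, hm0]
          exact congrArg (fun t => (⟨1, t⟩ : Σ i, ι i)) h.choose_spec
        · rw [hm1, dif_neg h, hcomm, hm'inv ⟨0, ⟨x, h⟩⟩, he0]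
      | (j+2), z =>
        rw [hm2, hcomm, hm'inv ⟨j+1, z⟩, he1 j z]
    · -- edge property
      have hembP : ∀ w : Σ i, auxι ι C i,
          (∃ (j : ℕ) (x : ι (j+1)) (y : ι j), emb w = ⟨j+1, x⟩ ∧ m (emb w) = ⟨j, y⟩ ∧
            f j (Pi.single x 1) y ≠ 0) ∨
          (∃ (j : ℕ) (x : ι (j+1)) (y : ι j), emb w = ⟨j, y⟩ ∧ m (emb w) = ⟨j+1, x⟩ ∧
            f j (Pi.single x 1) y ≠ 0) := by
        intro w
        rcases hm'edge w with ⟨j, x, y, hw1, hw2, hne⟩ | ⟨j, x, y, hw1, hw2, hne⟩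
        · left
          match j, x, y, hw1, hw2, hne with
          | 0, x, y, hw1, hw2, hne =>
            refine ⟨1, x, y.val, ?_, ?_, ?_⟩
            · rw [hw1]; exact he1 0 x
            · rw [hcomm, hw2]; exact he0 y
            · exact hne
          | (j+1), x, y, hw1, hw2, hne =>
            refine ⟨j+2, x, y, ?_, ?_, ?_⟩
            · rw [hw1]; exact he1 (j+1) x
            · rw [hcomm, hw2]; exact he1 j y
            · exact hne
        · right
          match j, x, y, hw1, hw2, hne with
          | 0, x, y, hw1, hw2, hne =>
            refine ⟨1, x, y.val, ?_, ?_, ?_⟩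
            · rw [hw1]; exact he0 y
            · rw [hcomm, hw2]; exact he1 0 x
            · exact hne
          | (j+1), x, y, hw1, hw2, hne =>
            refine ⟨j+2, x, y, ?_, ?_, ?_⟩
            · rw [hw1]; exact he1 j y
            · rw [hcomm, hw2]; exact he1 (j+1) x
            · exact hne
      rintro ⟨i, z⟩
      match i, z with
      | 0, y =>
        right
        exact ⟨0, g y, y, rfl, hm0 y, hg y⟩
      | 1, x =>
        by_cases h : ∃ y, g y = x
        · left
          refine ⟨0, x, h.choose, rfl, ?_, ?_⟩
          · rw [hm1, dif_pos h]
          · have := hg h.choose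
            rwa [h.choose_spec] at this
        · have hP := hembP ⟨0, ⟨x, h⟩⟩
          rw [he0] at hP
          exact hP
      | (j+2), z =>
        have hP := hembP ⟨j+1, z⟩
        rw [he1 j z] at hP
        exact hP


/-- The coordinate ring `R = ℂ[x_{ij} : 1 ≤ i,j ≤ k]` of `k × k` matrices. -/
abbrev SqRing (k : ℕ) := MvPolynomial (Fin k × Fin k) ℂ

/-- Given a complex of based free `R`-modules `F i = ι i →₀ R` with differentials
`d i : F (i+1) →ₗ[R] F i`, the induced `Frac(R)`-linear map
`F_{i+1} ⊗ Frac(R) → F_i ⊗ Frac(R)`, via the matrix of `d i` in the chosen bases. -/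
noncomputable def fracMap (k : ℕ) (ι : ℕ → Type) [∀ i, Fintype (ι i)]
    (d : ∀ i : ℕ, (ι (i + 1) →₀ SqRing k) →ₗ[SqRing k] (ι i →₀ SqRing k)) (i : ℕ) :
    (ι (i + 1) → FractionRing (SqRing k)) →ₗ[FractionRing (SqRing k)]
      (ι i → FractionRing (SqRing k)) :=
  Matrix.mulVecLin (Matrix.of fun y x =>
    algebraMap (SqRing k) (FractionRing (SqRing k)) ((d i (Finsupp.single x 1)) y))

/-- Let `R = ℂ[x_{ij} : 1 ≤ i,j ≤ k]` and let
`F_• : 0 → F_N → ⋯ → F_0 → 0` be a bounded complex of free `R`-modules with chosen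
bases, each basis element carrying a label from a poset `P`, such that each
differential sends a basis element labeled `λ` into the `R`-span of basis elements
with strictly smaller labels, and such that `F_• ⊗_R Frac(R)` is exact.  Then the
graph with one vertex per basis element and an edge from each basis element `x` of
`F_{i+1}` to each basis element `y` of `F_i` whenever `label(y) < label(x)` has a
perfect matching. -/
theorem labeled_complex_exact_after_fraction_field_has_matching
    (k : ℕ) (P : Type*) [PartialOrder P]
    (ι : ℕ → Type) [∀ i, Fintype (ι i)]
    (N : ℕ) (hbdd : ∀ i : ℕ, N < i → IsEmpty (ι i))
    (lab : ∀ i : ℕ, ι i → P)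
    (d : ∀ i : ℕ, (ι (i + 1) →₀ SqRing k) →ₗ[SqRing k] (ι i →₀ SqRing k))
    (hfilt : ∀ (i : ℕ) (x : ι (i + 1)) (y : ι i),
      (d i (Finsupp.single x 1)) y ≠ 0 → lab i y < lab (i + 1) x)
    (hsurj : LinearMap.range (fracMap k ι d 0) = ⊤)
    (hexact : ∀ i : ℕ,
      LinearMap.range (fracMap k ι d (i + 1)) = LinearMap.ker (fracMap k ι d i)) :
    ∃ m : (Σ i : ℕ, ι i) → (Σ i : ℕ, ι i),
      Function.Involutive m ∧ ∀ v, m v ≠ v ∧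
        (((m v).1 + 1 = v.1 ∧ lab (m v).1 (m v).2 < lab v.1 v.2) ∨
          (v.1 + 1 = (m v).1 ∧ lab v.1 v.2 < lab (m v).1 (m v).2)) := by
    classical
  obtain ⟨m, hminv, hmedge⟩ :=
    @fieldKey (FractionRing (SqRing k)) _ N ι _ (fun i => Classical.decEq _)
      (fracMap k ι d) hbdd hsurj hexact
  refine ⟨m, hminv, ?_⟩
  intro v
  rcases hmedge v with ⟨j, x, y, hv, hw, hne⟩ | ⟨j, x, y, hv, hw, hne⟩
  · have hlab : lab j y < lab (j+1) x := by
      apply hfilt j x y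
      intro h0
      apply hne
      simp [fracMap, Matrix.mulVec_single, h0]
    subst hv
    rw [hw]
    refine ⟨?_, Or.inl ⟨rfl, hlab⟩⟩
    intro h
    have := congrArg Sigma.fst h
    simp at this
  · have hlab : lab j y < lab (j+1) x := by
      apply hfilt j x y
      intro h0
      apply hne
      simp [fracMap, Matrix.mulVec_single, h0]
    subst hv
    rw [hw]
    refine ⟨?_, Or.inr ⟨rfl, hlab⟩⟩
    intro h
    have := congrArg Sigma.fst h
    simp at this
end

section
/- Let k = n and consider rank Betti tables β̃ = (β̃_{i,λ}) indexed by i ∈ ℤ and λ in the poset Y± of weakly decreasing integer sequences of length k, with nonnegative integer entries and finite support. If β̃ is a finite positive integer combination of homologically shifted pure tables β̃(i; λ ⊊ μ) (the table with entry 1 in positions (i,λ) and (i+1,μ) and 0 elsewhere), then β̃ satisfies: (a) ∑_{i,λ} (−1)^i β̃_{i,λ} = 0, and (b) for every choice of convex subsets S_i ⊆ Y± for each odd i, the inequality ∑_{i even} ∑_{λ ∈ Γ_i} β̃_{i,λ} ≥ ∑_{i odd} ∑_{λ ∈ S_i} β̃_{i,λ}, where Γ_i = {λ : μ ⊊ λ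 for some μ ∈ S_{i−1}} ∪ {λ : λ ⊊ μ for some μ ∈ S_{i+1}}. -/
open scoped Classical

/-- Weakly decreasing integer sequences of length `k` (the extended Young's lattice
`Y±`), ordered componentwise. -/
abbrev WDSeq (k : ℕ) := {l : Fin k → ℤ // Antitone l}

/-- The homologically shifted pure table `β̃(i; λ ⊊ μ)`: entry `1` in positions
`(i, λ)` and `(i+1, μ)`, and `0` elsewhere. -/
noncomputable def pureTable (k : ℕ) (i : ℤ) (l m : WDSeq k) : (ℤ × WDSeq k) →₀ ℕ :=
  Finsupp.single (i, l) 1 + Finsupp.single (i + 1, m) 1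

/-- If a rank Betti table `β̃` (nonnegative integer entries,
finite support, indexed by `i ∈ ℤ` and `λ ∈ Y±`) is a finite positive integer
combination of homologically shifted pure tables `β̃(i; λ ⊊ μ)`, then:
(a) `∑_{i,λ} (−1)^i β̃_{i,λ} = 0`, and (b) for every choice of convex subsets
`S_i ⊆ Y±` for each odd `i`, we have
`∑_{i even} ∑_{λ ∈ Γ_i} β̃_{i,λ} ≥ ∑_{i odd} ∑_{λ ∈ S_i} β̃_{i,λ}`, where
`Γ_i = {λ : μ ⊊ λ for some μ ∈ S_{i−1}} ∪ {λ : λ ⊊ μ for some μ ∈ S_{i+1}}`. -/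
theorem pure_table_combination_satisfies_convexity_inequalities
    (k : ℕ) (hk : 1 ≤ k) (β : (ℤ × WDSeq k) →₀ ℕ)
    (hdecomp : ∃ c : (ℤ × WDSeq k × WDSeq k) →₀ ℕ,
      (∀ t ∈ c.support, t.2.1 < t.2.2) ∧
        β = c.sum fun t m => m • pureTable k t.1 t.2.1 t.2.2) :
    (∑ p ∈ β.support, (-1 : ℚ) ^ (p.1 : ℤ) * (β p : ℚ)) = 0 ∧
      ∀ S : ℤ → Set (WDSeq k),
        (∀ i : ℤ, Odd i → ∀ a b c : WDSeq k,
          a ∈ S i → c ∈ S i → a ≤ b → b ≤ c → b ∈ S i) →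
        (∑ p ∈ β.support, if Odd p.1 ∧ p.2 ∈ S p.1 then β p else 0) ≤
          ∑ p ∈ β.support,
            if Even p.1 ∧
                ((∃ μ ∈ S (p.1 - 1), μ < p.2) ∨ (∃ μ ∈ S (p.1 + 1), p.2 < μ)) then
              β p else 0 := by
  obtain ⟨c, hc, hβ⟩ := hdecomp
  constructor
  · -- part (a)
    set F : ℤ × WDSeq k → ℕ →+ ℚ := fun p =>
      (AddMonoidHom.mulLeft ((-1 : ℚ) ^ (p.1 : ℤ))).comp (Nat.castAddMonoidHom ℚ) with hF
    have hrepr : (∑ p ∈ β.support, (-1 : ℚ) ^ (p.1 : ℤ) * (β p : ℚ))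
        = Finsupp.liftAddHom F β := by
      rw [Finsupp.liftAddHom_apply]; rfl
    rw [hrepr, hβ, map_finsuppSum, Finsupp.sum]
    apply Finset.sum_eq_zero
    intro t _
    rw [map_nsmul]
    have hz : Finsupp.liftAddHom F (pureTable k t.1 t.2.1 t.2.2) = 0 := by
      rw [pureTable, map_add, Finsupp.liftAddHom_apply_single,
        Finsupp.liftAddHom_apply_single]
      simp only [hF, AddMonoidHom.comp_apply, Nat.castAddMonoidHom,
        AddMonoidHom.coe_mk, ZeroHom.coe_mk, Nat.cast_one, AddMonoidHom.coe_mulLeft]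
      rw [zpow_add_one₀ (by norm_num : (-1 : ℚ) ≠ 0)]
      ring
    rw [hz, smul_zero]
  · -- part (b)
    intro S _hconv
    set FL : ℤ × WDSeq k → ℕ →+ ℕ := fun p =>
      if Odd p.1 ∧ p.2 ∈ S p.1 then AddMonoidHom.id ℕ else 0 with hFL
    set FR : ℤ × WDSeq k → ℕ →+ ℕ := fun p =>
      if Even p.1 ∧
          ((∃ μ ∈ S (p.1 - 1), μ < p.2) ∨ (∃ μ ∈ S (p.1 + 1), p.2 < μ)) then
        AddMonoidHom.id ℕ else 0 with hFR
    have evalL : ∀ p (n : ℕ), FL p n = if Odd p.1 ∧ p.2 ∈ S p.1 then n else 0 := by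
      intro p n; rw [hFL]; dsimp only; by_cases h : Odd p.1 ∧ p.2 ∈ S p.1
      · rw [if_pos h, if_pos h]; rfl
      · rw [if_neg h, if_neg h]; rfl
    have evalR : ∀ p (n : ℕ), FR p n = if Even p.1 ∧
        ((∃ μ ∈ S (p.1 - 1), μ < p.2) ∨ (∃ μ ∈ S (p.1 + 1), p.2 < μ)) then n else 0 := by
      intro p n; rw [hFR]; dsimp only; by_cases h : Even p.1 ∧ ((∃ μ ∈ S (p.1 - 1), μ < p.2) ∨ (∃ μ ∈ S (p.1 + 1), p.2 < μ))
      · rw [if_pos h, if_pos h]; rfl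
      · rw [if_neg h, if_neg h]; rfl
    have hreprL : (∑ p ∈ β.support, if Odd p.1 ∧ p.2 ∈ S p.1 then β p else 0)
        = Finsupp.liftAddHom FL β := by
      rw [Finsupp.liftAddHom_apply]
      exact (Finset.sum_congr rfl fun p _ => (evalL p (β p)).symm)
    have hreprR : (∑ p ∈ β.support, if Even p.1 ∧
          ((∃ μ ∈ S (p.1 - 1), μ < p.2) ∨ (∃ μ ∈ S (p.1 + 1), p.2 < μ)) then β p else 0)
        = Finsupp.liftAddHom FR β := by
      rw [Finsupp.liftAddHom_apply]
      exact (Finset.sum_congr rfl fun p _ => (evalR p (β p)).symm)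
    rw [hreprL, hreprR, hβ, map_finsuppSum, map_finsuppSum, Finsupp.sum, Finsupp.sum]
    apply Finset.sum_le_sum
    intro t ht
    rw [map_nsmul, map_nsmul]
    apply nsmul_le_nsmul_right
    -- per-table inequality
    obtain ⟨i, l, m⟩ := t
    have hlm : l < m := hc _ ht
    rw [pureTable, map_add, map_add, Finsupp.liftAddHom_apply_single,
      Finsupp.liftAddHom_apply_single, Finsupp.liftAddHom_apply_single,
      Finsupp.liftAddHom_apply_single, evalL, evalL, evalR, evalR]
    simp only
    rcases Int.even_or_odd i with he | ho
    · have h1 : ¬ (Odd i ∧ l ∈ S i) := fun h => (Int.not_odd_iff_even.2 he) h.1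
      rw [if_neg h1]
      by_cases hm : Odd (i + 1) ∧ m ∈ S (i + 1)
      · have : Even i ∧ ((∃ μ ∈ S (i - 1), μ < l) ∨ (∃ μ ∈ S (i + 1), l < μ)) :=
          ⟨he, Or.inr ⟨m, hm.2, hlm⟩⟩
        rw [if_pos hm, if_pos this]
        omega
      · rw [if_neg hm]; omega
    · have h2 : ¬ (Odd (i + 1) ∧ m ∈ S (i + 1)) := fun h => by
        have : Even (i + 1) := Int.even_add_one.2 (Int.not_even_iff_odd.2 ho)
        exact (Int.not_odd_iff_even.2 this) h.1
      rw [if_neg h2]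
      by_cases hl : Odd i ∧ l ∈ S i
      · have : Even (i + 1) ∧ ((∃ μ ∈ S (i + 1 - 1), μ < m) ∨ (∃ μ ∈ S (i + 1 + 1), m < μ)) := by
          refine ⟨Int.even_add_one.2 (Int.not_even_iff_odd.2 ho), Or.inl ⟨l, ?_, hlm⟩⟩
          simpa using hl.2
        rw [if_pos hl, if_pos this]
        omega
      · rw [if_neg hl]; omega
end
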